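/- arXiv:2301.03186 — 12 statements merged into one kernel-verified Lean document; each statement's English description precedes it below -/
import Mathlib

section
/- Fix a real L > 1 and reals y_0, y_1 with log(1 − 1/L) < y_0 < y_1, and fix any y > y_0. Let Y_1, …, Y_n be reals with y_0 ≤ Y_i ≤ y_1 for all i. Then n·(a_0·m_2 + b_0·m_1 + c_0) ≤ Σ_{i=1}^n log(1 + L·(e^{Y_i} − 1)), where a_0, b_0, c_0 are the quadratic coefficients determined by L, y and y_0. (This is the lower bound of Theorem 1; the supremum over y > y_0 of the left side is therefore also a lower bound.) -/
open Set

private noncomputable def Gf (L : ℝ) : ℝ → ℝ := fun s => 1 + L * (Real.exp s - 1)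

private lemma key (L y0 y a b c : ℝ) (hL : 1 < L)
    (h0 : Real.log (1 - 1 / L) < y0) (hy : y0 < y)
    (ha : a = (1 / (y - y0)) *
      (Real.log ((1 + L * (Real.exp y0 - 1)) / (1 + L * (Real.exp y - 1))) / (y - y0)
        + L * Real.exp y / (1 + L * (Real.exp y - 1))))
    (hb : b = L * Real.exp y / (1 + L * (Real.exp y - 1)) - 2 * a * y)
    (hc : c = Real.log (1 + L * (Real.exp y0 - 1)) - a * y0 ^ 2 - b * y0)
    (t : ℝ) (ht : y0 ≤ t) :
    a * t ^ 2 + b * t + c ≤ Real.log (1 + L * (Real.exp t - 1)) := by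
  have hL0 : (0:ℝ) < L := by linarith
  have hE : (0:ℝ) < L - 1 := by linarith
  have h1L : (0:ℝ) < 1 - 1 / L := by
    have : 1 / L < 1 := by rw [div_lt_one hL0]; linarith
    linarith
  set ℓ := Real.log (1 - 1 / L) with hldef
  -- positivity of the argument
  have hGpos : ∀ s, ℓ < s → 0 < Gf L s := by
    intro s hs
    have h1 : 1 - 1 / L < Real.exp s := by
      calc 1 - 1 / L = Real.exp ℓ := (Real.exp_log h1L).symm
      _ < Real.exp s := Real.exp_lt_exp.mpr hs
    have h2 : L * (1 - 1 / L) < L * Real.exp s := by nlinarith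
    have h3 : L * (1 - 1 / L) = L - 1 := by field_simp
    simp only [Gf]
    nlinarith
  -- derivative facts
  have hGd : ∀ s : ℝ, HasDerivAt (Gf L) (L * Real.exp s) s := by
    intro s
    exact (((Real.hasDerivAt_exp s).sub_const 1).const_mul L).const_add 1
  have hFd : ∀ s, ℓ < s → HasDerivAt (fun u => Real.log (Gf L u))
      (L * Real.exp s / Gf L s) s := by
    intro s hs
    simpa using (hGd s).log (hGpos s hs).ne'
  have hF1d : ∀ s, ℓ < s → HasDerivAt (fun u => L * Real.exp u / Gf L u)
      (L * Real.exp s * (1 - L) / (Gf L s) ^ 2) s := by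
    intro s hs
    have hN : HasDerivAt (fun u => L * Real.exp u) (L * Real.exp s) s :=
      (Real.hasDerivAt_exp s).const_mul L
    have h := hN.div (hGd s) (hGpos s hs).ne'
    refine h.congr_deriv ?_
    have hGe : Gf L s = 1 + L * (Real.exp s - 1) := rfl
    rw [hGe]; ring
  have hF2d : ∀ s, ℓ < s → HasDerivAt (fun u => L * Real.exp u * (1 - L) / (Gf L u) ^ 2)
      ((L * Real.exp s * (1 - L) * (Gf L s) ^ 2
        - L * Real.exp s * (1 - L) * (2 * Gf L s ^ 1 * (L * Real.exp s))) / ((Gf L s) ^ 2) ^ 2) s := by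
    intro s hs
    have hN : HasDerivAt (fun u => L * Real.exp u * (1 - L)) (L * Real.exp s * (1 - L)) s :=
      ((Real.hasDerivAt_exp s).const_mul L).mul_const (1 - L)
    have hD : HasDerivAt (fun u => (Gf L u) ^ 2) ((2 : ℕ) * Gf L s ^ 1 * (L * Real.exp s)) s :=
      (hGd s).pow 2
    have h := hN.div hD (pow_ne_zero 2 (hGpos s hs).ne')
    refine h.congr_deriv ?_
    norm_num
  -- K = derivative of the difference
  set K : ℝ → ℝ := fun u => L * Real.exp u / Gf L u - (2 * a * u + b) with hKdef
  have hKd : ∀ s, ℓ < s → HasDerivAt K (L * Real.exp s * (1 - L) / (Gf L s) ^ 2 - 2 * a) s := by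
    intro s hs
    have hlin : HasDerivAt (fun u => 2 * a * u + b) (2 * a) s := by
      simpa using ((hasDerivAt_id s).const_mul (2 * a)).add_const b
    exact (hF1d s hs).sub hlin
  have hsub : Ici y0 ⊆ Ioi ℓ := fun u hu => lt_of_lt_of_le h0 hu
  -- K is convex on [y0, ∞)
  have hKconv : ConvexOn ℝ (Ici y0) K := by
    have heq : Set.EqOn (deriv K) (fun s => L * Real.exp s * (1 - L) / (Gf L s) ^ 2 - 2 * a)
        (Ioi ℓ) := fun s hs => (hKd s hs).deriv
    apply convexOn_of_deriv2_nonneg (convex_Ici y0)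
    · intro u hu
      exact (hKd u (hsub hu)).continuousAt.continuousWithinAt
    · intro u hu
      exact (hKd u (hsub (interior_subset hu))).differentiableAt.differentiableWithinAt
    · intro u hu
      have hu' : u ∈ Ioi ℓ := hsub (interior_subset hu)
      have hev : deriv K =ᶠ[nhds u] fun s => L * Real.exp s * (1 - L) / (Gf L s) ^ 2 - 2 * a :=
        Filter.eventuallyEq_of_mem (isOpen_Ioi.mem_nhds hu') heq
      have hd2 : DifferentiableAt ℝ
          (fun s => L * Real.exp s * (1 - L) / (Gf L s) ^ 2 - 2 * a) u :=
        ((hF2d u hu').sub_const (2 * a)).differentiableAt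
      exact (hev.differentiableAt_iff.mpr hd2).differentiableWithinAt
    · intro u hu
      have hu' : u ∈ Ioi ℓ := hsub (interior_subset hu)
      have hev : deriv K =ᶠ[nhds u] fun s => L * Real.exp s * (1 - L) / (Gf L s) ^ 2 - 2 * a :=
        Filter.eventuallyEq_of_mem (isOpen_Ioi.mem_nhds hu') heq
      have hval : deriv (deriv K) u = (L * Real.exp u * (1 - L) * (Gf L u) ^ 2
          - L * Real.exp u * (1 - L) * (2 * Gf L u ^ 1 * (L * Real.exp u))) / ((Gf L u) ^ 2) ^ 2 := by
        rw [hev.deriv_eq]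
        exact ((hF2d u hu').sub_const (2 * a)).deriv
      have h2 : deriv^[2] K u = deriv (deriv K) u := by
        simp [Function.iterate_succ, Function.iterate_zero]
      rw [h2, hval]
      have hP : 0 < L * Real.exp u := by positivity
      have hg : 0 < Gf L u := hGpos u hu'
      have h2P : 0 < 2 * (L * Real.exp u) - Gf L u := by
        have hex := Real.exp_pos u
        have hGe : Gf L u = 1 + L * (Real.exp u - 1) := rfl
        rw [hGe]; nlinarith
      apply div_nonneg _ (by positivity)
      nlinarith [mul_pos (mul_pos hP hg) (mul_pos hE h2P)]
  -- H = log(G) minus the quadratic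
  set H : ℝ → ℝ := fun u => Real.log (Gf L u) - (a * u ^ 2 + b * u + c) with hHdef
  have hHd : ∀ s, ℓ < s → HasDerivAt H (K s) s := by
    intro s hs
    have hpoly : HasDerivAt (fun u => a * u ^ 2 + b * u + c) (2 * a * s + b) s := by
      have h1 : HasDerivAt (fun u : ℝ => u ^ 2) (2 * s) s := by
        simpa using hasDerivAt_pow 2 s
      have := ((h1.const_mul a).add ((hasDerivAt_id s).const_mul b)).add_const c
      refine this.congr_deriv ?_
      ring
    exact (hFd s hs).sub hpoly
  have hGy : 0 < Gf L y := hGpos y (lt_trans h0 hy)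
  have hGy0 : 0 < Gf L y0 := hGpos y0 h0
  have hyy0 : y - y0 ≠ 0 := sub_ne_zero.mpr (ne_of_gt hy)
  -- endpoint values
  have hHy0 : H y0 = 0 := by
    simp only [hHdef, Gf]
    rw [hc]; ring
  have hKy : K y = 0 := by
    simp only [hKdef, Gf]
    rw [hb]; ring
  have hqy : a * y ^ 2 + b * y + c = Real.log (Gf L y) := by
    have hlogdiv : Real.log (Gf L y0 / Gf L y) = Real.log (Gf L y0) - Real.log (Gf L y) :=
      Real.log_div hGy0.ne' hGy.ne'
    simp only [Gf] at hlogdiv hGy ⊢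
    rw [hc, hb, ha, hlogdiv]
    field_simp
    ring
  have hHy : H y = 0 := by
    simp only [hHdef]
    rw [← hqy]; ring
  -- Rolle: there is ξ in (y0, y) with K ξ = 0
  have hcont : ContinuousOn H (Icc y0 y) := fun u hu =>
    (hHd u (lt_of_lt_of_le h0 hu.1)).continuousAt.continuousWithinAt
  obtain ⟨ξ, hξmem, hξ0⟩ := exists_deriv_eq_zero hy hcont (hHy0.trans hHy.symm)
  have hKξ : K ξ = 0 := by
    have := (hHd ξ (lt_trans h0 hξmem.1)).deriv
    rw [← this]; exact hξ0
  have hξy0 : y0 < ξ := hξmem.1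
  have hξy : ξ < y := hξmem.2
  -- sign of K
  have hKmid : ∀ u, ξ ≤ u → u ≤ y → K u ≤ 0 := by
    intro u h1 h2
    have hmem : u ∈ segment ℝ ξ y := by
      rw [segment_eq_Icc hξy.le]; exact ⟨h1, h2⟩
    have := hKconv.le_on_segment (le_of_lt hξy0) (le_of_lt (lt_trans hξy0 hξy)) hmem
    rw [hKξ, hKy] at this
    simpa using this
  have hKright : ∀ u, y < u → 0 ≤ K u := by
    intro u hu
    have := hKconv.slope_mono_adjacent (x := ξ) (y := y) (z := u)
      (le_of_lt hξy0) (le_of_lt (lt_trans hξy0 (lt_trans hξy hu))) hξy hu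
    rw [hKξ, hKy] at this
    simp only [sub_zero, zero_sub, zero_div] at this
    have h1 : (0:ℝ) ≤ K u / (u - y) := by simpa using this
    have h2 : 0 < u - y := sub_pos.mpr hu
    have := mul_nonneg h1 h2.le
    rwa [div_mul_cancel₀ _ (ne_of_gt h2)] at this
  have hKleft : ∀ u, y0 ≤ u → u < ξ → 0 ≤ K u := by
    intro u h1 h2
    have := hKconv.slope_mono_adjacent (x := u) (y := ξ) (z := y)
      h1 (le_of_lt (lt_trans hξy0 hξy)) h2 hξy
    rw [hKξ, hKy] at this
    simp only [sub_zero, zero_sub] at this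
    have h3 : 0 < ξ - u := sub_pos.mpr h2
    have h4 : -K u / (ξ - u) ≤ 0 := le_trans this (by simp)
    have h5 := mul_nonpos_of_nonpos_of_nonneg h4 h3.le
    rw [div_mul_cancel₀ _ (ne_of_gt h3)] at h5
    linarith
  -- monotonicity of H on the three pieces
  have hHcont : ∀ u, y0 ≤ u → ContinuousAt H u := fun u hu =>
    (hHd u (lt_of_lt_of_le h0 hu)).continuousAt
  have hHderiv : ∀ u, y0 < u → deriv H u = K u := fun u hu =>
    (hHd u (lt_trans h0 hu)).deriv
  have hmono1 : MonotoneOn H (Icc y0 ξ) := by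
    apply monotoneOn_of_deriv_nonneg (convex_Icc y0 ξ)
    · exact fun u hu => (hHcont u hu.1).continuousWithinAt
    · intro u hu
      rw [interior_Icc] at hu
      exact (hHd u (lt_trans h0 hu.1)).differentiableAt.differentiableWithinAt
    · intro u hu
      rw [interior_Icc] at hu
      rw [hHderiv u hu.1]
      exact hKleft u hu.1.le hu.2
  have hanti : AntitoneOn H (Icc ξ y) := by
    apply antitoneOn_of_deriv_nonpos (convex_Icc ξ y)
    · exact fun u hu => (hHcont u (le_trans hξy0.le hu.1)).continuousWithinAt
    · intro u hu
      rw [interior_Icc] at hu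
      exact (hHd u (lt_trans h0 (lt_trans hξy0 hu.1))).differentiableAt.differentiableWithinAt
    · intro u hu
      rw [interior_Icc] at hu
      rw [hHderiv u (lt_trans hξy0 hu.1)]
      exact hKmid u hu.1.le hu.2.le
  have hmono2 : MonotoneOn H (Ici y) := by
    apply monotoneOn_of_deriv_nonneg (convex_Ici y)
    · exact fun u hu => (hHcont u (le_trans (lt_trans hξy0 hξy).le hu)).continuousWithinAt
    · intro u hu
      rw [interior_Ici] at hu
      exact (hHd u (lt_trans h0 (lt_trans hξy0 (lt_trans hξy hu)))).differentiableAt.differentiableWithinAt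
    · intro u hu
      rw [interior_Ici] at hu
      rw [hHderiv u (lt_trans hξy0 (lt_trans hξy hu))]
      exact hKright u hu
  -- conclude H t ≥ 0
  have hHt : 0 ≤ H t := by
    rcases le_or_gt t ξ with h1 | h1
    · have := hmono1 ⟨le_rfl, hξy0.le⟩ ⟨ht, h1⟩ ht
      rw [hHy0] at this; exact this
    · rcases le_or_gt t y with h2 | h2
      · have := hanti ⟨h1.le, h2⟩ ⟨hξy.le, le_rfl⟩ h2
        rw [hHy] at this; exact this
      · have := hmono2 (self_mem_Ici) h2.le h2.le
        rw [hHy] at this; exact this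
  have : Real.log (Gf L t) = Real.log (1 + L * (Real.exp t - 1)) := rfl
  simp only [hHdef, Gf] at hHt
  linarith

theorem stmt_0 (L y0 y1 y : ℝ) (hL : 1 < L)
    (h0 : Real.log (1 - 1 / L) < y0) (h01 : y0 < y1) (hy : y0 < y)
    (n : ℕ) (Y : Fin n → ℝ) (hY : ∀ i, y0 ≤ Y i ∧ Y i ≤ y1)
    (a b c m1 m2 : ℝ)
    (ha : a = (1 / (y - y0)) *
      (Real.log ((1 + L * (Real.exp y0 - 1)) / (1 + L * (Real.exp y - 1))) / (y - y0)
        + L * Real.exp y / (1 + L * (Real.exp y - 1))))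
    (hb : b = L * Real.exp y / (1 + L * (Real.exp y - 1)) - 2 * a * y)
    (hc : c = Real.log (1 + L * (Real.exp y0 - 1)) - a * y0 ^ 2 - b * y0)
    (hm1 : m1 = (1 / (n : ℝ)) * ∑ i, Y i)
    (hm2 : m2 = (1 / (n : ℝ)) * ∑ i, (Y i) ^ 2) :
    (n : ℝ) * (a * m2 + b * m1 + c) ≤ ∑ i, Real.log (1 + L * (Real.exp (Y i) - 1)) := by
  have hsum : ∑ i, (a * (Y i) ^ 2 + b * (Y i) + c) ≤ ∑ i, Real.log (1 + L * (Real.exp (Y i) - 1)) :=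
    Finset.sum_le_sum fun i _ => key L y0 y a b c hL h0 hy ha hb hc (Y i) (hY i).1
  rcases Nat.eq_zero_or_pos n with hn | hn
  · subst hn; simp
  · have hn' : (n:ℝ) ≠ 0 := Nat.cast_ne_zero.mpr hn.ne'
    have heq : (n:ℝ) * (a * m2 + b * m1 + c) = ∑ i, (a * (Y i) ^ 2 + b * (Y i) + c) := by
      rw [hm1, hm2]
      rw [Finset.sum_add_distrib, Finset.sum_add_distrib, ← Finset.mul_sum, ← Finset.mul_sum]
      rw [Finset.sum_const, Finset.card_univ, Fintype.card_fin]
      field_simp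
      ring
    linarith
end

section
/- Fix a real L > 1 and reals y_0, y_1 with log(1 − 1/L) < y_0 < y_1, and fix any y with log(1 − 1/L) < y < y_1. Let Y_1, …, Y_n be reals with y_0 ≤ Y_i ≤ y_1 for all i. Then Σ_{i=1}^n log(1 + L·(e^{Y_i} − 1)) ≤ n·(a_1·m_2 + b_1·m_1 + c_1), where a_1, b_1, c_1 are the quadratic coefficients determined by L, y and y_1. (This is the upper bound of Theorem 1; the infimum over such y of the right side is therefore also an upper bound.) -/
open Real Set

noncomputable def lvgF (L t : ℝ) : ℝ := Real.log (1 + L * (Real.exp t - 1))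
noncomputable def lvgPhi (L t : ℝ) : ℝ := L * Real.exp t / (1 + L * (Real.exp t - 1))
noncomputable def lvgG (L a b c t : ℝ) : ℝ := a * t ^ 2 + b * t + c - lvgF L t
noncomputable def lvgH (L a b t : ℝ) : ℝ := 2 * a * t + b - lvgPhi L t
noncomputable def lvgH' (L a t : ℝ) : ℝ :=
  2 * a - L * Real.exp t * (1 - L) / (1 + L * (Real.exp t - 1)) ^ 2

lemma lvg_den_pos {L t : ℝ} (hL : 1 < L) (ht : Real.log (1 - 1 / L) < t) :
    0 < 1 + L * (Real.exp t - 1) := by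
  have hLpos : (0 : ℝ) < L := by linarith
  have hfrac : (0 : ℝ) < 1 - 1 / L := by
    have : 1 / L < 1 := by rw [div_lt_one hLpos]; exact hL
    linarith
  have h1 : 1 - 1 / L < Real.exp t := by
    calc 1 - 1 / L = Real.exp (Real.log (1 - 1 / L)) := (Real.exp_log hfrac).symm
      _ < Real.exp t := Real.exp_lt_exp.mpr ht
  have h2 : L * (1 - 1 / L) = L - 1 := by field_simp
  nlinarith [mul_lt_mul_of_pos_left h1 hLpos]

lemma lvg_hasDerivAt_den (L t : ℝ) :
    HasDerivAt (fun t => 1 + L * (Real.exp t - 1)) (L * Real.exp t) t := by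
  have := (((Real.hasDerivAt_exp t).sub_const 1).const_mul L).const_add 1
  simpa using this

lemma lvg_hasDerivAt_F {L t : ℝ} (hL : 1 < L) (ht : Real.log (1 - 1 / L) < t) :
    HasDerivAt (lvgF L) (lvgPhi L t) t := by
  have hne : 1 + L * (Real.exp t - 1) ≠ 0 := (lvg_den_pos hL ht).ne'
  exact (lvg_hasDerivAt_den L t).log hne

lemma lvg_hasDerivAt_G {L a b c t : ℝ} (hL : 1 < L) (ht : Real.log (1 - 1 / L) < t) :
    HasDerivAt (lvgG L a b c) (lvgH L a b t) t := by
  have h1 : HasDerivAt (fun t : ℝ => a * t ^ 2 + b * t + c) (2 * a * t + b) t := by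
    have := (((hasDerivAt_pow 2 t).const_mul a).add ((hasDerivAt_id t).const_mul b)).add_const c
    refine this.congr_deriv ?_
    ring
  exact h1.sub (lvg_hasDerivAt_F hL ht)

lemma lvg_hasDerivAt_H {L a b t : ℝ} (hL : 1 < L) (ht : Real.log (1 - 1 / L) < t) :
    HasDerivAt (lvgH L a b) (lvgH' L a t) t := by
  have hne : 1 + L * (Real.exp t - 1) ≠ 0 := (lvg_den_pos hL ht).ne'
  have hphi : HasDerivAt (lvgPhi L)
      (L * Real.exp t * (1 - L) / (1 + L * (Real.exp t - 1)) ^ 2) t := by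
    have := ((Real.hasDerivAt_exp t).const_mul L).div (lvg_hasDerivAt_den L t) hne
    refine this.congr_deriv ?_
    ring
  have h1 : HasDerivAt (fun t : ℝ => 2 * a * t + b) (2 * a) t := by
    have := ((hasDerivAt_id t).const_mul (2 * a)).add_const b
    simpa using this
  exact h1.sub hphi

lemma lvg_H'_anti {L a : ℝ} (hL : 1 < L) :
    AntitoneOn (lvgH' L a) (Ioi (Real.log (1 - 1 / L))) := by
  intro s hs t ht hst
  rcases eq_or_lt_of_le hst with rfl | hlt
  · exact le_refl _
  have hLpos : (0 : ℝ) < L := by linarith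
  have hds : 0 < 1 + L * (Real.exp s - 1) := lvg_den_pos hL hs
  have hdt : 0 < 1 + L * (Real.exp t - 1) := lvg_den_pos hL ht
  have hfrac : (0 : ℝ) < 1 - 1 / L := by
    have : 1 / L < 1 := by rw [div_lt_one hLpos]; exact hL
    linarith
  have hes : 1 - 1 / L < Real.exp s := by
    calc 1 - 1 / L = Real.exp (Real.log (1 - 1 / L)) := (Real.exp_log hfrac).symm
      _ < Real.exp s := Real.exp_lt_exp.mpr hs
  have het : 1 - 1 / L < Real.exp t := by
    calc 1 - 1 / L = Real.exp (Real.log (1 - 1 / L)) := (Real.exp_log hfrac).symm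
      _ < Real.exp t := Real.exp_lt_exp.mpr ht
  have hest : Real.exp s < Real.exp t := Real.exp_lt_exp.mpr hlt
  have hLs : L - 1 < L * Real.exp s := by
    have := mul_lt_mul_of_pos_left hes hLpos
    have h2 : L * (1 - 1 / L) = L - 1 := by field_simp
    linarith
  have hLt : L - 1 < L * Real.exp t := by
    have := mul_lt_mul_of_pos_left het hLpos
    have h2 : L * (1 - 1 / L) = L - 1 := by field_simp
    linarith
  have hL1 : (0 : ℝ) < L - 1 := by linarith
  have hkey : (L - 1) ^ 2 < (L * Real.exp s) * (L * Real.exp t) := by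
    nlinarith
  unfold lvgH'
  rw [sub_le_sub_iff_left, div_le_div_iff₀ (pow_pos hds 2) (pow_pos hdt 2)]
  nlinarith [mul_pos (sub_pos.2 hest) (sub_pos.2 hkey), mul_pos hLpos hL1,
    mul_pos (mul_pos hLpos hL1) (mul_pos (sub_pos.2 hest) (sub_pos.2 hkey))]

lemma lvg_H_concave {L a b : ℝ} (hL : 1 < L) :
    ConcaveOn ℝ (Ioi (Real.log (1 - 1 / L))) (lvgH L a b) := by
  have hint : interior (Ioi (Real.log (1 - 1 / L))) = Ioi (Real.log (1 - 1 / L)) :=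
    isOpen_Ioi.interior_eq
  refine AntitoneOn.concaveOn_of_deriv (convex_Ioi _) ?_ ?_ ?_
  · exact fun x hx => (lvg_hasDerivAt_H hL hx).continuousAt.continuousWithinAt
  · rw [hint]; exact fun x hx => (lvg_hasDerivAt_H hL hx).differentiableAt.differentiableWithinAt
  · rw [hint]
    intro s hs t ht hst
    rw [(lvg_hasDerivAt_H hL hs).deriv, (lvg_hasDerivAt_H hL ht).deriv]
    exact lvg_H'_anti hL hs ht hst

set_option maxHeartbeats 1000000 in
theorem stmt_1 (L y0 y1 y : ℝ) (hL : 1 < L)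
    (h0 : Real.log (1 - 1 / L) < y0) (h01 : y0 < y1) (hy0 : Real.log (1 - 1 / L) < y) (hy1 : y < y1)
    (n : ℕ) (Y : Fin n → ℝ) (hY : ∀ i, y0 ≤ Y i ∧ Y i ≤ y1)
    (a b c m1 m2 : ℝ)
    (ha : a = (1 / (y - y1)) *
      (Real.log ((1 + L * (Real.exp y1 - 1)) / (1 + L * (Real.exp y - 1))) / (y - y1)
        + L * Real.exp y / (1 + L * (Real.exp y - 1))))
    (hb : b = L * Real.exp y / (1 + L * (Real.exp y - 1)) - 2 * a * y)
    (hc : c = Real.log (1 + L * (Real.exp y1 - 1)) - a * y1 ^ 2 - b * y1)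
    (hm1 : m1 = (1 / (n : ℝ)) * ∑ i, Y i)
    (hm2 : m2 = (1 / (n : ℝ)) * ∑ i, (Y i) ^ 2) :
    ∑ i, Real.log (1 + L * (Real.exp (Y i) - 1)) ≤ (n : ℝ) * (a * m2 + b * m1 + c) := by
  set ℓ := Real.log (1 - 1 / L) with hldef
  have hy1D : ℓ < y1 := lt_trans hy0 hy1
  have hdy : 0 < 1 + L * (Real.exp y - 1) := lvg_den_pos hL hy0
  have hdy1 : 0 < 1 + L * (Real.exp y1 - 1) := lvg_den_pos hL hy1D
  -- g vanishes at y1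
  have hgy1 : lvgG L a b c y1 = 0 := by
    unfold lvgG lvgF
    rw [hc]; ring
  -- g vanishes at y
  have hyne : y - y1 ≠ 0 := by intro h; apply absurd hy1; simp [sub_eq_zero.mp h]
  have hlogdiv : Real.log ((1 + L * (Real.exp y1 - 1)) / (1 + L * (Real.exp y - 1)))
      = Real.log (1 + L * (Real.exp y1 - 1)) - Real.log (1 + L * (Real.exp y - 1)) :=
    Real.log_div hdy1.ne' hdy.ne'
  have ha' : a * (y - y1) ^ 2 = (Real.log (1 + L * (Real.exp y1 - 1))
      - Real.log (1 + L * (Real.exp y - 1)))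
      + (L * Real.exp y / (1 + L * (Real.exp y - 1))) * (y - y1) := by
    rw [ha, hlogdiv]
    field_simp
  have hgy : lvgG L a b c y = 0 := by
    unfold lvgG lvgF
    rw [hc, hb]
    linear_combination -ha'
  have hhy : lvgH L a b y = 0 := by
    unfold lvgH lvgPhi
    rw [hb]; ring
  -- Rolle: find ξ ∈ (y, y1) with h ξ = 0
  have hgcont : ∀ s : Set ℝ, s ⊆ Ioi ℓ → ContinuousOn (lvgG L a b c) s :=
    fun s hs x hx => (lvg_hasDerivAt_G hL (hs hx)).continuousAt.continuousWithinAt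
  have hIccsub : Icc y y1 ⊆ Ioi ℓ := fun x hx => lt_of_lt_of_le hy0 hx.1
  obtain ⟨ξ, hξmem, hξ0⟩ := exists_hasDerivAt_eq_zero hy1 (hgcont _ hIccsub)
    (hgy.trans hgy1.symm) (fun x hx => lvg_hasDerivAt_G hL (lt_trans hy0 hx.1))
  obtain ⟨hyξ, hξy1⟩ := hξmem
  have hξD : ℓ < ξ := lt_trans hy0 hyξ
  have hconc := lvg_H_concave (a := a) (b := b) hL
  -- h ≥ 0 on [y, ξ]
  have hpos : ∀ t, y ≤ t → t ≤ ξ → 0 ≤ lvgH L a b t := by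
    intro t h1 h2
    obtain ⟨μ, ν, hμ, hν, hsum, heq⟩ := (Convex.mem_Icc (h1.trans h2)).mp ⟨h1, h2⟩
    have H := hconc.2 (mem_Ioi.mpr hy0) (mem_Ioi.mpr hξD) hμ hν hsum
    simp only [smul_eq_mul] at H
    rw [heq, hhy, hξ0] at H
    linarith
  -- h ≤ 0 on (ℓ, y]
  have hneg1 : ∀ t, ℓ < t → t ≤ y → lvgH L a b t ≤ 0 := by
    intro t htD hty
    rcases eq_or_lt_of_le hty with rfl | hlt
    · exact le_of_eq hhy
    have hmem : y ∈ Icc t ξ := ⟨le_of_lt hlt, le_of_lt hyξ⟩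
    obtain ⟨μ, ν, hμ, hν, hsum, heq⟩ := (Convex.mem_Icc (le_trans hlt.le hyξ.le)).mp hmem
    have H := hconc.2 (mem_Ioi.mpr htD) (mem_Ioi.mpr hξD) hμ hν hsum
    simp only [smul_eq_mul] at H
    rw [heq, hhy, hξ0] at H
    have hlin : μ * (ξ - t) = ξ - y := by linear_combination -heq + ξ * hsum
    have hμpos : 0 < μ := by nlinarith [hlin, sub_pos.2 (lt_trans hlt hyξ)]
    nlinarith [H, hμpos]
  -- h ≤ 0 on [ξ, ∞) ∩ (ℓ, ∞)
  have hneg2 : ∀ t, ξ ≤ t → lvgH L a b t ≤ 0 := by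
    intro t hξt
    rcases eq_or_lt_of_le hξt with rfl | hlt
    · exact le_of_eq hξ0
    have hmem : ξ ∈ Icc y t := ⟨le_of_lt hyξ, le_of_lt hlt⟩
    obtain ⟨μ, ν, hμ, hν, hsum, heq⟩ := (Convex.mem_Icc (le_trans hyξ.le hlt.le)).mp hmem
    have H := hconc.2 (mem_Ioi.mpr hy0) (mem_Ioi.mpr (lt_trans hξD hlt)) hμ hν hsum
    simp only [smul_eq_mul] at H
    rw [heq, hhy, hξ0] at H
    have hlin : ν * (t - y) = ξ - y := by linear_combination heq - y * hsum
    have hνpos : 0 < ν := by nlinarith [hlin, sub_pos.2 (lt_trans hyξ hlt)]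
    nlinarith [H, hνpos]
  -- key pointwise bound
  have key : ∀ t, y0 ≤ t → t ≤ y1 →
      Real.log (1 + L * (Real.exp t - 1)) ≤ a * t ^ 2 + b * t + c := by
    intro t h1 h2
    have htD : ℓ < t := lt_of_lt_of_le h0 h1
    have hgt : 0 ≤ lvgG L a b c t := by
      rcases le_total t y with hty | hyt
      · have hsub : Icc t y ⊆ Ioi ℓ := fun x hx => lt_of_lt_of_le htD hx.1
        have hmono : AntitoneOn (lvgG L a b c) (Icc t y) := by
          refine antitoneOn_of_deriv_nonpos (convex_Icc t y) (hgcont _ hsub) ?_ ?_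
          · rw [interior_Icc]
            exact fun x hx => (lvg_hasDerivAt_G hL
              (lt_trans htD hx.1)).differentiableAt.differentiableWithinAt
          · rw [interior_Icc]
            intro x hx
            rw [(lvg_hasDerivAt_G hL (lt_trans htD hx.1)).deriv]
            exact hneg1 x (lt_trans htD hx.1) hx.2.le
        have := hmono (left_mem_Icc.mpr hty) (right_mem_Icc.mpr hty) hty
        rw [hgy] at this
        exact this
      · rcases le_total t ξ with htξ | hξt
        · have hsub : Icc y t ⊆ Ioi ℓ := fun x hx => lt_of_lt_of_le hy0 hx.1
          have hmono : MonotoneOn (lvgG L a b c) (Icc y t) := by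
            refine monotoneOn_of_deriv_nonneg (convex_Icc y t) (hgcont _ hsub) ?_ ?_
            · rw [interior_Icc]
              exact fun x hx => (lvg_hasDerivAt_G hL
                (lt_trans hy0 hx.1)).differentiableAt.differentiableWithinAt
            · rw [interior_Icc]
              intro x hx
              rw [(lvg_hasDerivAt_G hL (lt_trans hy0 hx.1)).deriv]
              exact hpos x hx.1.le (hx.2.le.trans htξ)
          have := hmono (left_mem_Icc.mpr hyt) (right_mem_Icc.mpr hyt) hyt
          rw [hgy] at this
          exact this
        · have hsub : Icc t y1 ⊆ Ioi ℓ := fun x hx => lt_of_lt_of_le htD hx.1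
          have hmono : AntitoneOn (lvgG L a b c) (Icc t y1) := by
            refine antitoneOn_of_deriv_nonpos (convex_Icc t y1) (hgcont _ hsub) ?_ ?_
            · rw [interior_Icc]
              exact fun x hx => (lvg_hasDerivAt_G hL
                (lt_trans htD hx.1)).differentiableAt.differentiableWithinAt
            · rw [interior_Icc]
              intro x hx
              rw [(lvg_hasDerivAt_G hL (lt_trans htD hx.1)).deriv]
              exact hneg2 x (hξt.trans hx.1.le)
          have := hmono (left_mem_Icc.mpr h2) (right_mem_Icc.mpr h2) h2
          rw [hgy1] at this
          exact this
    unfold lvgG lvgF at hgt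
    linarith
  have hsum : ∑ i, Real.log (1 + L * (Real.exp (Y i) - 1))
      ≤ ∑ i, (a * (Y i) ^ 2 + b * Y i + c) :=
    Finset.sum_le_sum fun i _ => key (Y i) (hY i).1 (hY i).2
  rcases Nat.eq_zero_or_pos n with rfl | hn
  · simpa using hsum
  · have hn' : (n : ℝ) ≠ 0 := Nat.cast_ne_zero.mpr hn.ne'
    calc ∑ i, Real.log (1 + L * (Real.exp (Y i) - 1))
        ≤ ∑ i, (a * (Y i) ^ 2 + b * Y i + c) := hsum
      _ = (n : ℝ) * (a * m2 + b * m1 + c) := by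
          rw [hm1, hm2]
          rw [Finset.sum_add_distrib, Finset.sum_add_distrib, ← Finset.mul_sum,
            ← Finset.mul_sum, Finset.sum_const, Finset.card_univ, Fintype.card_fin,
            nsmul_eq_mul]
          field_simp
end

section
/- Fix a real L with 0 < L < 1 and reals y_0, y_1 with y_0 < y_1 < log(1/L − 1), and fix any y with y_0 < y < log(1/L − 1). Let Y_1, …, Y_n be reals with y_0 ≤ Y_i ≤ y_1 for all i. Then n·(a_0·m_2 + b_0·m_1 + c_0) ≤ Σ_{i=1}^n log(1 + L·(e^{Y_i} − 1)), where a_0, b_0, c_0 are the quadratic coefficients determined by L, y and y_0. (This is the lower bound of Theorem 2.) -/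
open Real

noncomputable def Dfun (L t : ℝ) : ℝ := 1 - L + L * Real.exp t
noncomputable def f0 (L t : ℝ) : ℝ := Real.log (Dfun L t)
noncomputable def f1 (L t : ℝ) : ℝ := L * Real.exp t / Dfun L t
noncomputable def f2 (L t : ℝ) : ℝ := L * (1 - L) * Real.exp t / (Dfun L t) ^ 2
noncomputable def f3 (L t : ℝ) : ℝ :=
  L * (1 - L) * Real.exp t * (1 - L - L * Real.exp t) / (Dfun L t) ^ 3

lemma Dpos {L : ℝ} (hL0 : 0 < L) (hL1 : L < 1) (t : ℝ) : 0 < Dfun L t := by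
  have := Real.exp_pos t
  have : 0 < L * Real.exp t := by positivity
  unfold Dfun; linarith

lemma hasDerivAt_Dfun (L t : ℝ) : HasDerivAt (Dfun L) (L * Real.exp t) t := by
  exact ((Real.hasDerivAt_exp t).const_mul L).const_add (1 - L)

lemma hasDerivAt_f0 {L : ℝ} (hL0 : 0 < L) (hL1 : L < 1) (t : ℝ) :
    HasDerivAt (f0 L) (f1 L t) t := by
  exact (hasDerivAt_Dfun L t).log (Dpos hL0 hL1 t).ne'

lemma hasDerivAt_f1 {L : ℝ} (hL0 : 0 < L) (hL1 : L < 1) (t : ℝ) :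
    HasDerivAt (f1 L) (f2 L t) t := by
  have h := (((Real.hasDerivAt_exp t).const_mul L).div (hasDerivAt_Dfun L t)
    (Dpos hL0 hL1 t).ne')
  refine h.congr_deriv ?_
  have hD := (Dpos hL0 hL1 t).ne'
  unfold f2 Dfun at *
  field_simp
  ring

lemma hasDerivAt_f2 {L : ℝ} (hL0 : 0 < L) (hL1 : L < 1) (t : ℝ) :
    HasDerivAt (f2 L) (f3 L t) t := by
  have hD := (Dpos hL0 hL1 t).ne'
  have hD2 : (Dfun L t) ^ 2 ≠ 0 := pow_ne_zero 2 hD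
  have hden : HasDerivAt (fun s => (Dfun L s) ^ 2) (2 * Dfun L t * (L * Real.exp t)) t := by
    exact ((hasDerivAt_Dfun L t).pow 2).congr_deriv (by simp only [Nat.cast_ofNat]; ring)
  have h := (((Real.hasDerivAt_exp t).const_mul (L * (1 - L))).div hden hD2)
  have heq : (f2 L) = fun s => L * (1 - L) * Real.exp s / (Dfun L s) ^ 2 := rfl
  rw [heq]
  refine h.congr_deriv ?_
  unfold f3 Dfun at *
  field_simp
  ring

noncomputable def P0 (L y C G0 t : ℝ) : ℝ :=
  (f0 L t - f0 L y - f1 L y * (t - y)) * C - G0 * (t - y) ^ 2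
noncomputable def P1 (L y C G0 t : ℝ) : ℝ :=
  (f1 L t - f1 L y) * C - 2 * G0 * (t - y)
noncomputable def P2 (L y C G0 t : ℝ) : ℝ := f2 L t * C - 2 * G0

lemma hasDerivAt_P0 {L : ℝ} (hL0 : 0 < L) (hL1 : L < 1) (y C G0 t : ℝ) :
    HasDerivAt (P0 L y C G0) (P1 L y C G0 t) t := by
  have h1 : HasDerivAt (fun s => f0 L s - f0 L y - f1 L y * (s - y))
      (f1 L t - f1 L y) t := by
    have := ((hasDerivAt_f0 hL0 hL1 t).sub_const (f0 L y)).sub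
      (((hasDerivAt_id t).sub_const y).const_mul (f1 L y))
    exact this.congr_deriv (by ring)
  have h2 : HasDerivAt (fun s => G0 * (s - y) ^ 2) (2 * G0 * (t - y)) t := by
    have := (((hasDerivAt_id t).sub_const y).pow 2).const_mul G0
    refine this.congr_deriv ?_
    simp [id]
    ring
  exact (h1.mul_const C).sub h2

lemma hasDerivAt_P1 {L : ℝ} (hL0 : 0 < L) (hL1 : L < 1) (y C G0 t : ℝ) :
    HasDerivAt (P1 L y C G0) (P2 L y C G0 t) t := by
  have h1 := ((hasDerivAt_f1 hL0 hL1 t).sub_const (f1 L y)).mul_const C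
  have h2 : HasDerivAt (fun s => 2 * G0 * (s - y)) (2 * G0) t := by
    simpa using ((hasDerivAt_id t).sub_const y).const_mul (2 * G0)
  exact h1.sub h2

lemma hasDerivAt_P2 {L : ℝ} (hL0 : 0 < L) (hL1 : L < 1) (y C G0 t : ℝ) :
    HasDerivAt (P2 L y C G0) (f3 L t * C) t := by
  exact ((hasDerivAt_f2 hL0 hL1 t).mul_const C).sub_const (2 * G0)

lemma f3_pos {L : ℝ} (hL0 : 0 < L) (hL1 : L < 1) {t : ℝ}
    (ht : t < Real.log (1 / L - 1)) : 0 < f3 L t := by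
  have hinv : (1 : ℝ) < 1 / L := (one_lt_div hL0).2 hL1
  have h1 : Real.exp t < 1 / L - 1 := by
    calc Real.exp t < Real.exp (Real.log (1 / L - 1)) := Real.exp_lt_exp.2 ht
    _ = 1 / L - 1 := Real.exp_log (by linarith)
  have h2 : L * Real.exp t < 1 - L := by
    have := (mul_lt_mul_of_pos_left h1 hL0)
    calc L * Real.exp t < L * (1 / L - 1) := this
    _ = 1 - L := by field_simp
  have hD := Dpos hL0 hL1 t
  have he := Real.exp_pos t
  unfold f3
  apply div_pos
  · have h3 : 0 < L * (1 - L) * Real.exp t := by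
      have : (0:ℝ) < 1 - L := by linarith
      positivity
    nlinarith
  · positivity

lemma P0_nonneg {L y0 y Z : ℝ} (hL0 : 0 < L) (hL1 : L < 1) (hy0 : y0 < y)
    (hyM : y < Real.log (1 / L - 1)) (hZM : Z < Real.log (1 / L - 1)) (hyZ : y ≤ Z)
    {t : ℝ} (ht0 : y0 ≤ t) (htZ : t ≤ Z) :
    0 ≤ P0 L y ((y0 - y) ^ 2) (f0 L y0 - f0 L y - f1 L y * (y0 - y)) t := by
  set M := Real.log (1 / L - 1) with hM
  set C := (y0 - y) ^ 2 with hC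
  set G0 := f0 L y0 - f0 L y - f1 L y * (y0 - y) with hG0
  have hCpos : 0 < C := by
    have h : y0 - y ≠ 0 := fun h => absurd hy0 (by linarith [sub_eq_zero.1 h])
    positivity
  have cont0 : Continuous (P0 L y C G0) :=
    Differentiable.continuous fun s => (hasDerivAt_P0 hL0 hL1 y C G0 s).differentiableAt
  have cont1 : Continuous (P1 L y C G0) :=
    Differentiable.continuous fun s => (hasDerivAt_P1 hL0 hL1 y C G0 s).differentiableAt
  have cont2 : Continuous (P2 L y C G0) :=
    Differentiable.continuous fun s => (hasDerivAt_P2 hL0 hL1 y C G0 s).differentiableAt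
  have diff0 : Differentiable ℝ (P0 L y C G0) :=
    fun s => (hasDerivAt_P0 hL0 hL1 y C G0 s).differentiableAt
  have diff1 : Differentiable ℝ (P1 L y C G0) :=
    fun s => (hasDerivAt_P1 hL0 hL1 y C G0 s).differentiableAt
  have hP0y0 : P0 L y C G0 y0 = 0 := by unfold P0; rw [hC, hG0]; ring
  have hP0y : P0 L y C G0 y = 0 := by unfold P0; ring
  have hP1y : P1 L y C G0 y = 0 := by unfold P1; ring
  -- Rolle 1
  obtain ⟨ξ, hξ, hP1ξ⟩ : ∃ ξ ∈ Set.Ioo y0 y, P1 L y C G0 ξ = 0 :=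
    exists_hasDerivAt_eq_zero hy0 cont0.continuousOn (hP0y0.trans hP0y.symm)
      (fun x _ => hasDerivAt_P0 hL0 hL1 y C G0 x)
  -- Rolle 2
  obtain ⟨η, hη, hP2η⟩ : ∃ η ∈ Set.Ioo ξ y, P2 L y C G0 η = 0 :=
    exists_hasDerivAt_eq_zero hξ.2 cont1.continuousOn (hP1ξ.trans hP1y.symm)
      (fun x _ => hasDerivAt_P1 hL0 hL1 y C G0 x)
  have hηM : η < M := lt_trans hη.2 hyM
  -- P2 strictly monotone on Iio M
  have hmono2 : StrictMonoOn (P2 L y C G0) (Set.Iio M) := by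
    apply strictMonoOn_of_deriv_pos (convex_Iio M) cont2.continuousOn
    intro x hx
    rw [interior_Iio] at hx
    rw [(hasDerivAt_P2 hL0 hL1 y C G0 x).deriv]
    exact mul_pos (f3_pos hL0 hL1 hx) hCpos
  -- P1 antitone on [y0, η]
  have hanti1 : AntitoneOn (P1 L y C G0) (Set.Icc y0 η) := by
    apply antitoneOn_of_deriv_nonpos (convex_Icc y0 η) cont1.continuousOn
      (diff1.differentiableOn)
    intro x hx
    rw [interior_Icc] at hx
    rw [(hasDerivAt_P1 hL0 hL1 y C G0 x).deriv]
    have : P2 L y C G0 x < P2 L y C G0 η :=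
      hmono2 (lt_trans hx.2 hηM) hηM hx.2
    linarith [hP2η]
  -- P1 monotone on [η, Z]
  have hmono1 : MonotoneOn (P1 L y C G0) (Set.Icc η Z) := by
    apply monotoneOn_of_deriv_nonneg (convex_Icc η Z) cont1.continuousOn
      (diff1.differentiableOn)
    intro x hx
    rw [interior_Icc] at hx
    rw [(hasDerivAt_P1 hL0 hL1 y C G0 x).deriv]
    have : P2 L y C G0 η < P2 L y C G0 x :=
      hmono2 hηM (lt_of_lt_of_le hx.2 (le_of_lt hZM)) hx.1
    linarith [hP2η]
  have hξη : ξ < η := hη.1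
  have hηy : η < y := hη.2
  -- sign of P1
  have s1 : ∀ x ∈ Set.Icc y0 ξ, 0 ≤ P1 L y C G0 x := by
    intro x hx
    have := hanti1 ⟨hx.1, le_trans hx.2 hξη.le⟩ ⟨le_trans hx.1 hx.2, hξη.le⟩ hx.2
    linarith [hP1ξ]
  have s2 : ∀ x ∈ Set.Icc ξ y, P1 L y C G0 x ≤ 0 := by
    intro x hx
    rcases le_or_gt x η with h | h
    · have := hanti1 ⟨hξ.1.le, hξη.le⟩ ⟨le_trans hξ.1.le hx.1, h⟩ hx.1
      linarith [hP1ξ]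
    · have := hmono1 ⟨h.le, le_trans hx.2 hyZ⟩ ⟨hηy.le, hyZ⟩ hx.2
      linarith [hP1y]
  have s3 : ∀ x ∈ Set.Icc y Z, 0 ≤ P1 L y C G0 x := by
    intro x hx
    have := hmono1 ⟨hηy.le, hyZ⟩ ⟨le_trans hηy.le hx.1, hx.2⟩ hx.1
    linarith [hP1y]
  -- P0 monotone pieces
  have m1 : MonotoneOn (P0 L y C G0) (Set.Icc y0 ξ) := by
    apply monotoneOn_of_deriv_nonneg (convex_Icc y0 ξ) cont0.continuousOn
      (diff0.differentiableOn)
    intro x hx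
    rw [interior_Icc] at hx
    rw [(hasDerivAt_P0 hL0 hL1 y C G0 x).deriv]
    exact s1 x ⟨hx.1.le, hx.2.le⟩
  have m2 : AntitoneOn (P0 L y C G0) (Set.Icc ξ y) := by
    apply antitoneOn_of_deriv_nonpos (convex_Icc ξ y) cont0.continuousOn
      (diff0.differentiableOn)
    intro x hx
    rw [interior_Icc] at hx
    rw [(hasDerivAt_P0 hL0 hL1 y C G0 x).deriv]
    exact s2 x ⟨hx.1.le, hx.2.le⟩
  have m3 : MonotoneOn (P0 L y C G0) (Set.Icc y Z) := by
    apply monotoneOn_of_deriv_nonneg (convex_Icc y Z) cont0.continuousOn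
      (diff0.differentiableOn)
    intro x hx
    rw [interior_Icc] at hx
    rw [(hasDerivAt_P0 hL0 hL1 y C G0 x).deriv]
    exact s3 x ⟨hx.1.le, hx.2.le⟩
  -- conclusion
  rcases le_or_gt t ξ with h | h
  · have := m1 ⟨le_refl y0, hξ.1.le⟩ ⟨ht0, h⟩ ht0
    linarith [hP0y0]
  · rcases le_or_gt t y with h' | h'
    · have := m2 ⟨h.le, h'⟩ ⟨hξ.2.le, le_refl y⟩ h'
      linarith [hP0y]
    · have := m3 ⟨le_refl y, hyZ⟩ ⟨h'.le, htZ⟩ h'.le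
      linarith [hP0y]

lemma key_point (L y0 y1 y : ℝ) (hL0 : 0 < L) (hL1 : L < 1)
    (h01 : y0 < y1) (h1 : y1 < Real.log (1 / L - 1)) (hy0 : y0 < y)
    (hy1 : y < Real.log (1 / L - 1))
    (a b c : ℝ)
    (ha : a = (1 / (y - y0)) *
      (Real.log ((1 + L * (Real.exp y0 - 1)) / (1 + L * (Real.exp y - 1))) / (y - y0)
        + L * Real.exp y / (1 + L * (Real.exp y - 1))))
    (hb : b = L * Real.exp y / (1 + L * (Real.exp y - 1)) - 2 * a * y)
    (hc : c = Real.log (1 + L * (Real.exp y0 - 1)) - a * y0 ^ 2 - b * y0)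
    (t : ℝ) (ht0 : y0 ≤ t) (ht1 : t ≤ y1) :
    a * t ^ 2 + b * t + c ≤ Real.log (1 + L * (Real.exp t - 1)) := by
  have hDconv : ∀ s : ℝ, 1 + L * (Real.exp s - 1) = Dfun L s := fun s => by
    unfold Dfun; ring
  have hyy0 : y - y0 ≠ 0 := sub_ne_zero.2 (ne_of_gt hy0)
  have hfy : L * Real.exp y / (1 + L * (Real.exp y - 1)) = f1 L y := by
    rw [hDconv y]; rfl
  have hlogq : Real.log ((1 + L * (Real.exp y0 - 1)) / (1 + L * (Real.exp y - 1)))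
      = f0 L y0 - f0 L y := by
    rw [hDconv y0, hDconv y,
      Real.log_div (Dpos hL0 hL1 y0).ne' (Dpos hL0 hL1 y).ne']
    rfl
  have hb' : b = f1 L y - 2 * a * y := by rw [hb, hfy]
  have hc' : c = f0 L y0 - a * y0 ^ 2 - b * y0 := by
    rw [hc, hDconv y0]; rfl
  have haC : a * (y0 - y) ^ 2 = f0 L y0 - f0 L y - f1 L y * (y0 - y) := by
    rw [ha, hlogq, hfy]
    field_simp
    ring
  have hP := P0_nonneg hL0 hL1 hy0 hy1 (max_lt hy1 h1) (le_max_left y y1)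
    ht0 (le_trans ht1 (le_max_right y y1))
  rw [hDconv t]
  show a * t ^ 2 + b * t + c ≤ f0 L t
  unfold P0 at hP
  have hCpos : (0:ℝ) < (y0 - y) ^ 2 := by
    have h : y0 - y ≠ 0 := fun h => absurd hy0 (by linarith [sub_eq_zero.1 h])
    positivity
  have hineq : a * (t - y) ^ 2 ≤ f0 L t - f0 L y - f1 L y * (t - y) := by
    rw [← haC] at hP
    nlinarith [hP, hCpos]
  have hid : a * t ^ 2 + b * t + c
      = f0 L y + f1 L y * (t - y) + a * (t - y) ^ 2 := by
    rw [hc', hb']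
    linear_combination -haC
  linarith [hid, hineq]

theorem stmt_2 (L y0 y1 y : ℝ) (hL0 : 0 < L) (hL1 : L < 1)
    (h01 : y0 < y1) (h1 : y1 < Real.log (1 / L - 1)) (hy0 : y0 < y) (hy1 : y < Real.log (1 / L - 1))
    (n : ℕ) (Y : Fin n → ℝ) (hY : ∀ i, y0 ≤ Y i ∧ Y i ≤ y1)
    (a b c m1 m2 : ℝ)
    (ha : a = (1 / (y - y0)) *
      (Real.log ((1 + L * (Real.exp y0 - 1)) / (1 + L * (Real.exp y - 1))) / (y - y0)
        + L * Real.exp y / (1 + L * (Real.exp y - 1))))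
    (hb : b = L * Real.exp y / (1 + L * (Real.exp y - 1)) - 2 * a * y)
    (hc : c = Real.log (1 + L * (Real.exp y0 - 1)) - a * y0 ^ 2 - b * y0)
    (hm1 : m1 = (1 / (n : ℝ)) * ∑ i, Y i)
    (hm2 : m2 = (1 / (n : ℝ)) * ∑ i, (Y i) ^ 2) :
    (n : ℝ) * (a * m2 + b * m1 + c) ≤ ∑ i, Real.log (1 + L * (Real.exp (Y i) - 1)) := by
  rcases Nat.eq_zero_or_pos n with hn | hn
  · subst hn; simp
  have hn' : (n : ℝ) ≠ 0 := Nat.cast_ne_zero.2 hn.ne'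
  have hLHS : (n : ℝ) * (a * m2 + b * m1 + c) = ∑ i, (a * (Y i) ^ 2 + b * Y i + c) := by
    rw [hm1, hm2, Finset.sum_add_distrib, Finset.sum_add_distrib, ← Finset.mul_sum,
      ← Finset.mul_sum, Finset.sum_const, Finset.card_univ, Fintype.card_fin,
      nsmul_eq_mul]
    field_simp
  rw [hLHS]
  apply Finset.sum_le_sum
  intro i _
  exact key_point L y0 y1 y hL0 hL1 h01 h1 hy0 hy1 a b c ha hb hc (Y i) (hY i).1 (hY i).2
end

section
/- Fix a real L with 0 < L < 1 and reals y_0, y_1 with y_0 < y_1 < log(1/L − 1), and fix any y < y_1. Let Y_1, …, Y_n be reals with y_0 ≤ Y_i ≤ y_1 for all i. Then Σ_{i=1}^n log(1 + L·(e^{Y_i} − 1)) ≤ n·(a_1·m_2 + b_1·m_1 + c_1), where a_1, b_1, c_1 are the quadratic coefficients determined by L, y and y_1. (This is the upper bound of Theorem 2.) -/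
theorem stmt_3 (L y0 y1 y : ℝ) (hL0 : 0 < L) (hL1 : L < 1)
    (h01 : y0 < y1) (h1 : y1 < Real.log (1 / L - 1)) (hy : y < y1)
    (n : ℕ) (Y : Fin n → ℝ) (hY : ∀ i, y0 ≤ Y i ∧ Y i ≤ y1)
    (a b c m1 m2 : ℝ)
    (ha : a = (1 / (y - y1)) *
      (Real.log ((1 + L * (Real.exp y1 - 1)) / (1 + L * (Real.exp y - 1))) / (y - y1)
        + L * Real.exp y / (1 + L * (Real.exp y - 1))))
    (hb : b = L * Real.exp y / (1 + L * (Real.exp y - 1)) - 2 * a * y)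
    (hc : c = Real.log (1 + L * (Real.exp y1 - 1)) - a * y1 ^ 2 - b * y1)
    (hm1 : m1 = (1 / (n : ℝ)) * ∑ i, Y i)
    (hm2 : m2 = (1 / (n : ℝ)) * ∑ i, (Y i) ^ 2) :
    ∑ i, Real.log (1 + L * (Real.exp (Y i) - 1)) ≤ (n : ℝ) * (a * m2 + b * m1 + c) := by
  have hform : ∀ t : ℝ, 1 + L * (Real.exp t - 1) = 1 - L + L * Real.exp t := fun t => by ring
  simp only [hform] at ha hb hc ⊢
  have hD : ∀ x : ℝ, 0 < 1 - L + L * Real.exp x := by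
    intro x
    have := Real.exp_pos x
    nlinarith
  set M := Real.log (1 / L - 1) with hM
  have hLM : L * Real.exp M = 1 - L := by
    rw [hM, Real.exp_log (by rw [sub_pos, lt_div_iff₀ hL0, one_mul]; exact hL1)]
    field_simp
  set F : ℝ → ℝ := fun x => Real.log (1 - L + L * Real.exp x) with hF
  set φ : ℝ → ℝ := fun x => L * Real.exp x / (1 - L + L * Real.exp x) with hφ
  set g : ℝ → ℝ := fun x => 2 * a * x + b - φ x with hg
  set h : ℝ → ℝ := fun x => a * x ^ 2 + b * x + c - F x with hh
  set f2 : ℝ → ℝ := fun x => (1 - L) * (L * Real.exp x) / (1 - L + L * Real.exp x) ^ 2 with hf2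
  have hden : ∀ x : ℝ, HasDerivAt (fun x => 1 - L + L * Real.exp x) (L * Real.exp x) x :=
    fun x => ((Real.hasDerivAt_exp x).const_mul L).const_add (1 - L)
  have hFd : ∀ x : ℝ, HasDerivAt F (φ x) x := fun x => (hden x).log (hD x).ne'
  have hhd : ∀ x : ℝ, HasDerivAt h (g x) x := by
    intro x
    have h1' : HasDerivAt (fun t : ℝ => t ^ 2) (2 * x) x := by
      simpa using hasDerivAt_pow 2 x
    have hq : HasDerivAt (fun x : ℝ => a * x ^ 2 + b * x + c) (2 * a * x + b) x := by
      have := ((h1'.const_mul a).add ((hasDerivAt_id x).const_mul b)).add_const c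
      exact this.congr_deriv (by ring)
    exact hq.sub (hFd x)
  have hgd : ∀ x : ℝ, HasDerivAt g (2 * a - f2 x) x := by
    intro x
    have hnum : HasDerivAt (fun x : ℝ => L * Real.exp x) (L * Real.exp x) x :=
      (Real.hasDerivAt_exp x).const_mul L
    have hφd : HasDerivAt φ (f2 x) x := by
      have hne := (hD x).ne'
      have := hnum.div (hden x) hne
      convert this using 1
      show (1 - L) * (L * Real.exp x) / (1 - L + L * Real.exp x) ^ 2 = _
      field_simp
      ring
      all_goals rfl
    have hlin : HasDerivAt (fun x : ℝ => 2 * a * x + b) (2 * a) x := by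
      simpa using ((hasDerivAt_id x).const_mul (2 * a)).add_const b
    exact hlin.sub hφd
  -- monotonicity of f2 on Iic M
  have hf2mono : MonotoneOn f2 (Set.Iic M) := by
    intro x1 hx1 x2 hx2 h12
    have hu1 : 0 < L * Real.exp x1 := by positivity
    have hu2 : 0 < L * Real.exp x2 := by positivity
    have h12u : L * Real.exp x1 ≤ L * Real.exp x2 :=
      mul_le_mul_of_nonneg_left (Real.exp_le_exp.2 h12) hL0.le
    have hub : L * Real.exp x2 ≤ 1 - L := by
      rw [← hLM]
      exact mul_le_mul_of_nonneg_left (Real.exp_le_exp.2 hx2) hL0.le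
    have hprod : (L * Real.exp x1) * (L * Real.exp x2) ≤ (1 - L) ^ 2 := by nlinarith
    show (1 - L) * (L * Real.exp x1) / (1 - L + L * Real.exp x1) ^ 2
        ≤ (1 - L) * (L * Real.exp x2) / (1 - L + L * Real.exp x2) ^ 2
    rw [div_le_div_iff₀ (pow_pos (hD x1) 2) (pow_pos (hD x2) 2)]
    nlinarith [mul_nonneg (sub_nonneg.2 h12u) (sub_nonneg.2 hprod), sub_pos.2 hL1]
  have hgderiv : ∀ x : ℝ, deriv g x = 2 * a - f2 x := fun x => (hgd x).deriv
  have hconc : ConcaveOn ℝ (Set.Iic M) g := by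
    apply AntitoneOn.concaveOn_of_deriv (convex_Iic M)
    · exact fun x _ => ((hgd x).differentiableAt.continuousAt).continuousWithinAt
    · exact fun x _ => (hgd x).differentiableAt.differentiableWithinAt
    · intro x1 hx1 x2 hx2 h12
      rw [interior_Iic] at hx1 hx2
      rw [hgderiv, hgderiv]
      have := hf2mono (Set.Iio_subset_Iic_self hx1) (Set.Iio_subset_Iic_self hx2) h12
      linarith
  -- zeros
  have hyne : y - y1 ≠ 0 := sub_ne_zero.2 hy.ne
  have hlog : Real.log ((1 - L + L * Real.exp y1) / (1 - L + L * Real.exp y)) = F y1 - F y :=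
    Real.log_div (hD y1).ne' (hD y).ne'
  rw [hlog] at ha
  have ha' : a = 1 / (y - y1) * ((F y1 - F y) / (y - y1) + φ y) := ha
  have hb' : b = φ y - 2 * a * y := hb
  have hc' : c = F y1 - a * y1 ^ 2 - b * y1 := hc
  have haa : a * (y - y1) ^ 2 = F y1 - F y + φ y * (y - y1) := by
    field_simp at ha'
    linear_combination ha'
  have hgy : g y = 0 := by
    show 2 * a * y + b - φ y = 0
    rw [hb']; ring
  have hhy1 : h y1 = 0 := by
    show a * y1 ^ 2 + b * y1 + c - F y1 = 0
    rw [hc']; ring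
  have hhy : h y = 0 := by
    show a * y ^ 2 + b * y + c - F y = 0
    rw [hc', hb']
    linear_combination -haa
  -- Rolle
  obtain ⟨ξ, hξ, hgξ⟩ :=
    exists_hasDerivAt_eq_zero hy
      (fun x _ => ((hhd x).differentiableAt.continuousAt).continuousWithinAt)
      (hhy.trans hhy1.symm) (fun x _ => hhd x)
  obtain ⟨hyξ, hξy1⟩ := hξ
  have hmemM : ∀ {x : ℝ}, x ≤ y1 → x ∈ Set.Iic M := fun hx => Set.mem_Iic.2 (le_trans hx h1.le)
  -- sign of g on the three regions
  have hgleft : ∀ x : ℝ, x ≤ y → g x ≤ 0 := by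
    intro x hx
    rcases eq_or_lt_of_le hx with rfl | hx
    · exact le_of_eq hgy
    · have hξx : 0 < ξ - x := by linarith
      have hp : (0:ℝ) ≤ (ξ - y) / (ξ - x) := div_nonneg (by linarith) hξx.le
      have hq : (0:ℝ) ≤ (y - x) / (ξ - x) := div_nonneg (by linarith) hξx.le
      have hpq : (ξ - y) / (ξ - x) + (y - x) / (ξ - x) = 1 := by
        field_simp
        ring
      have key := hconc.2 (hmemM (show x ≤ y1 by linarith)) (hmemM (show ξ ≤ y1 from hξy1.le)) hp hq hpq
      simp only [smul_eq_mul] at key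
      have hcomb : (ξ - y) / (ξ - x) * x + (y - x) / (ξ - x) * ξ = y := by
        field_simp
        ring
      rw [hcomb, hgy, hgξ, mul_zero, add_zero] at key
      have hppos : (0:ℝ) < (ξ - y) / (ξ - x) := div_pos (by linarith) hξx
      by_contra hgt
      push_neg at hgt
      exact absurd key (not_le.2 (mul_pos hppos hgt))
  have hgmid : ∀ x : ℝ, y ≤ x → x ≤ ξ → 0 ≤ g x := by
    intro x hx1 hx2
    have hξy : 0 < ξ - y := by linarith
    have hp : (0:ℝ) ≤ (ξ - x) / (ξ - y) := div_nonneg (by linarith) hξy.le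
    have hq : (0:ℝ) ≤ (x - y) / (ξ - y) := div_nonneg (by linarith) hξy.le
    have hpq : (ξ - x) / (ξ - y) + (x - y) / (ξ - y) = 1 := by
      field_simp
      ring
    have key := hconc.2 (hmemM (show y ≤ y1 from hy.le)) (hmemM (show ξ ≤ y1 from hξy1.le)) hp hq hpq
    simp only [smul_eq_mul] at key
    have hcomb : (ξ - x) / (ξ - y) * y + (x - y) / (ξ - y) * ξ = x := by
      field_simp
      ring
    rw [hcomb, hgy, hgξ, mul_zero, mul_zero, add_zero] at key
    exact key
  have hgright : ∀ x : ℝ, ξ ≤ x → x ≤ y1 → g x ≤ 0 := by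
    intro x hx1 hx2
    have hxy : 0 < x - y := by linarith
    have hp : (0:ℝ) ≤ (x - ξ) / (x - y) := div_nonneg (by linarith) hxy.le
    have hq : (0:ℝ) ≤ (ξ - y) / (x - y) := div_nonneg (by linarith) hxy.le
    have hpq : (x - ξ) / (x - y) + (ξ - y) / (x - y) = 1 := by
      field_simp
      ring
    have key := hconc.2 (hmemM (show y ≤ y1 from hy.le)) (hmemM (show x ≤ y1 from hx2)) hp hq hpq
    simp only [smul_eq_mul] at key
    have hcomb : (x - ξ) / (x - y) * y + (ξ - y) / (x - y) * x = ξ := by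
      field_simp
      ring
    rw [hcomb, hgy, hgξ, mul_zero, zero_add] at key
    have hqpos : (0:ℝ) < (ξ - y) / (x - y) := div_pos (by linarith) hxy
    by_contra hgt
    push_neg at hgt
    exact absurd key (not_le.2 (mul_pos hqpos hgt))
  -- h is nonneg on (-∞, y1]
  have hmain : ∀ x : ℝ, x ≤ y1 → 0 ≤ h x := by
    intro x hx
    rcases le_total x y with hxy | hxy
    · have hanti : AntitoneOn h (Set.Icc x y) := by
        apply antitoneOn_of_deriv_nonpos (convex_Icc x y)
        · exact fun t _ => ((hhd t).differentiableAt.continuousAt).continuousWithinAt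
        · exact fun t _ => (hhd t).differentiableAt.differentiableWithinAt
        · intro t ht
          rw [interior_Icc] at ht
          rw [(hhd t).deriv]
          exact hgleft t ht.2.le
      have := hanti (Set.left_mem_Icc.2 hxy) (Set.right_mem_Icc.2 hxy) hxy
      rw [hhy] at this
      exact this
    · rcases le_total x ξ with hxξ | hxξ
      · have hmono : MonotoneOn h (Set.Icc y x) := by
          apply monotoneOn_of_deriv_nonneg (convex_Icc y x)
          · exact fun t _ => ((hhd t).differentiableAt.continuousAt).continuousWithinAt
          · exact fun t _ => (hhd t).differentiableAt.differentiableWithinAt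
          · intro t ht
            rw [interior_Icc] at ht
            rw [(hhd t).deriv]
            exact hgmid t ht.1.le (le_trans ht.2.le hxξ)
        have := hmono (Set.left_mem_Icc.2 hxy) (Set.right_mem_Icc.2 hxy) hxy
        rw [hhy] at this
        exact this
      · have hanti : AntitoneOn h (Set.Icc x y1) := by
          apply antitoneOn_of_deriv_nonpos (convex_Icc x y1)
          · exact fun t _ => ((hhd t).differentiableAt.continuousAt).continuousWithinAt
          · exact fun t _ => (hhd t).differentiableAt.differentiableWithinAt
          · intro t ht
            rw [interior_Icc] at ht
            rw [(hhd t).deriv]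
            exact hgright t (le_trans hxξ ht.1.le) ht.2.le
        have := hanti (Set.left_mem_Icc.2 hx) (Set.right_mem_Icc.2 hx) hx
        rw [hhy1] at this
        exact this
  -- pointwise bound
  have key : ∀ i, Real.log (1 - L + L * Real.exp (Y i)) ≤ a * (Y i) ^ 2 + b * (Y i) + c := by
    intro i
    have h0 : (0:ℝ) ≤ a * (Y i) ^ 2 + b * (Y i) + c - Real.log (1 - L + L * Real.exp (Y i)) :=
      hmain (Y i) (hY i).2
    linarith
  calc ∑ i, Real.log (1 - L + L * Real.exp (Y i))
      ≤ ∑ i, (a * (Y i) ^ 2 + b * (Y i) + c) := Finset.sum_le_sum fun i _ => key i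
    _ = (n : ℝ) * (a * m2 + b * m1 + c) := by
        rw [hm1, hm2]
        rcases eq_or_ne n 0 with rfl | hn
        · simp
        · have hn' : (n : ℝ) ≠ 0 := Nat.cast_ne_zero.2 hn
          rw [Finset.sum_add_distrib, Finset.sum_add_distrib, ← Finset.mul_sum, ← Finset.mul_sum,
            Finset.sum_const, Finset.card_univ, Fintype.card_fin]
          field_simp
          ring
end

section
/- Fix a real L with 0 < L < 1 and reals y_0, y_1 with log(1/L − 1) < y_0 < y_1, and fix any y > y_0. Let Y_1, …, Y_n be reals with y_0 ≤ Y_i ≤ y_1 for all i. Then Σ_{i=1}^n log(1 + L·(e^{Y_i} − 1)) ≤ n·(a_0·m_2 + b_0·m_1 + c_0), where a_0, b_0, c_0 are the quadratic coefficients determined by L, y and y_0. (This is the upper bound of Theorem 3.) -/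
open Real Set

lemma quad_upper (L y0 y a b c : ℝ) (hL0 : 0 < L) (hL1 : L < 1)
    (h0 : Real.log (1 / L - 1) < y0) (hy : y0 < y)
    (ha : a = (1 / (y - y0)) *
      (Real.log ((1 + L * (Real.exp y0 - 1)) / (1 + L * (Real.exp y - 1))) / (y - y0)
        + L * Real.exp y / (1 + L * (Real.exp y - 1))))
    (hb : b = L * Real.exp y / (1 + L * (Real.exp y - 1)) - 2 * a * y)
    (hc : c = Real.log (1 + L * (Real.exp y0 - 1)) - a * y0 ^ 2 - b * y0) :
    ∀ t, y0 ≤ t → Real.log (1 + L * (Real.exp t - 1)) ≤ a * t ^ 2 + b * t + c := by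
  -- basic positivity
  have hGpos : ∀ t : ℝ, 0 < 1 + L * (Real.exp t - 1) := by
    intro t; nlinarith [Real.exp_pos t]
  have hGne : ∀ t : ℝ, 1 + L * (Real.exp t - 1) ≠ 0 := fun t => (hGpos t).ne'
  have hd : y - y0 ≠ 0 := by linarith
  -- the key sign fact for t > y0
  have hkey : ∀ t : ℝ, y0 < t → 1 - L < L * Real.exp t := by
    intro t ht
    have h1L : (0:ℝ) < 1 / L - 1 := by
      rw [sub_pos, lt_div_iff₀ hL0]; linarith
    have : 1 / L - 1 < Real.exp t := by
      have := (Real.log_lt_iff_lt_exp h1L).mp (lt_trans h0 ht)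
      linarith
    have hL' : L * (1 / L - 1) < L * Real.exp t := by
      exact (mul_lt_mul_iff_right₀ hL0).mpr this
    have : L * (1 / L - 1) = 1 - L := by field_simp
    linarith
  -- functions
  set G : ℝ → ℝ := fun t => 1 + L * (Real.exp t - 1) with hGdef
  set h : ℝ → ℝ := fun t => Real.log (G t) - (a * t ^ 2 + b * t + c) with hhdef
  set h1 : ℝ → ℝ := fun t => L * Real.exp t / G t - (2 * a * t + b) with hh1def
  set h2 : ℝ → ℝ := fun t => (1 - L) * (L * Real.exp t) / (G t) ^ 2 - 2 * a with hh2def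
  have hG : ∀ t, HasDerivAt G (L * Real.exp t) t := by
    intro t
    exact (((Real.hasDerivAt_exp t).sub_const 1).const_mul L).const_add 1
  have hh : ∀ t, HasDerivAt h (h1 t) t := by
    intro t
    have hlog : HasDerivAt (fun t => Real.log (G t)) (L * Real.exp t / G t) t :=
      (hG t).log (hGne t)
    have hq : HasDerivAt (fun t : ℝ => a * t ^ 2 + b * t + c) (2 * a * t + b) t := by
      have := (((hasDerivAt_pow 2 t).const_mul a).add ((hasDerivAt_id t).const_mul b)).add_const c
      refine this.congr_deriv ?_
      ring
    exact hlog.sub hq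
  have hh1 : ∀ t, HasDerivAt h1 (h2 t) t := by
    intro t
    have hnum : HasDerivAt (fun t => L * Real.exp t) (L * Real.exp t) t :=
      (Real.hasDerivAt_exp t).const_mul L
    have hdiv : HasDerivAt (fun t => L * Real.exp t / G t)
        ((L * Real.exp t * G t - L * Real.exp t * (L * Real.exp t)) / (G t) ^ 2) t :=
      hnum.div (hG t) (hGne t)
    have hq : HasDerivAt (fun t : ℝ => 2 * a * t + b) (2 * a) t := by
      simpa using ((hasDerivAt_id t).const_mul (2 * a)).add_const b
    have := hdiv.sub hq
    refine this.congr_deriv ?_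
    have : L * Real.exp t * G t - L * Real.exp t * (L * Real.exp t)
        = (1 - L) * (L * Real.exp t) := by
      simp only [hGdef]; ring
    rw [hh2def]
    simp only [this]
  have hh2' : ∀ t, HasDerivAt h2
      ((1 - L) * (L * Real.exp t) * ((1 - L) - L * Real.exp t) / (G t) ^ 3) t := by
    intro t
    have hnum : HasDerivAt (fun t => (1 - L) * (L * Real.exp t)) ((1 - L) * (L * Real.exp t)) t :=
      ((Real.hasDerivAt_exp t).const_mul L).const_mul (1 - L)
    have hden : HasDerivAt (fun t => (G t) ^ 2) (2 * G t ^ 1 * (L * Real.exp t)) t :=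
      (hG t).pow 2
    have hdiv := (hnum.div hden (pow_ne_zero 2 (hGne t))).sub_const (2 * a)
    refine hdiv.congr_deriv ?_
    have hGne' := hGne t
    field_simp
    simp only [hGdef]
    ring
  -- h'' is strictly decreasing on [y0, ∞)
  have hanti : StrictAntiOn h2 (Set.Ici y0) := by
    apply strictAntiOn_of_deriv_neg (convex_Ici y0)
      (fun x _ => ((hh2' x).differentiableAt).continuousAt.continuousWithinAt)
    intro x hx
    rw [interior_Ici] at hx
    rw [(hh2' x).deriv]
    have h1 := hkey x hx
    have h2 := hGpos x
    have h3 := Real.exp_pos x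
    apply div_neg_of_neg_of_pos
    · exact mul_neg_of_pos_of_neg (mul_pos (by linarith) (by positivity)) (by linarith)
    · positivity
  -- values at the endpoints
  have hhy0 : h y0 = 0 := by
    show Real.log (1 + L * (Real.exp y0 - 1)) - (a * y0 ^ 2 + b * y0 + c) = 0
    rw [hc]; ring
  have haa : a * (y - y0) ^ 2 =
      (Real.log (1 + L * (Real.exp y0 - 1)) - Real.log (1 + L * (Real.exp y - 1)))
        + (L * Real.exp y / (1 + L * (Real.exp y - 1))) * (y - y0) := by
    rw [ha, Real.log_div (hGne y0) (hGne y)]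
    field_simp [hd]
  have hhy : h y = 0 := by
    show Real.log (1 + L * (Real.exp y - 1)) - (a * y ^ 2 + b * y + c) = 0
    rw [hc, hb]
    linear_combination haa
  have hh1y : h1 y = 0 := by
    show L * Real.exp y / (1 + L * (Real.exp y - 1)) - (2 * a * y + b) = 0
    rw [hb]; ring
  -- Rolle: a critical point of h in (y0, y)
  have hcont : ∀ s : Set ℝ, ContinuousOn h s :=
    fun s => fun x _ => ((hh x).differentiableAt).continuousAt.continuousWithinAt
  obtain ⟨ξ, hξ, hξ0⟩ := exists_deriv_eq_zero hy (hcont _) (hhy0.trans hhy.symm)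
  have hξ1 : h1 ξ = 0 := by rw [← (hh ξ).deriv]; exact hξ0
  -- Rolle again: a zero of h2 in (ξ, y)
  have hcont1 : ∀ s : Set ℝ, ContinuousOn h1 s :=
    fun s => fun x _ => ((hh1 x).differentiableAt).continuousAt.continuousWithinAt
  obtain ⟨η, hη, hη0⟩ := exists_deriv_eq_zero hξ.2 (hcont1 _) (hξ1.trans hh1y.symm)
  have hη2 : h2 η = 0 := by rw [← (hh1 η).deriv]; exact hη0
  have hy0ξ : y0 < ξ := hξ.1
  have hξη : ξ < η := hη.1
  have hηy : η < y := hη.2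
  have hηmem : η ∈ Set.Ici y0 := le_of_lt (lt_trans hy0ξ hξη)
  -- h1 is monotone on [y0, η]
  have hmono1 : MonotoneOn h1 (Set.Icc y0 η) := by
    apply monotoneOn_of_deriv_nonneg (convex_Icc y0 η)
      (fun x _ => ((hh1 x).differentiableAt).continuousAt.continuousWithinAt)
      (fun x _ => ((hh1 x).differentiableAt).differentiableWithinAt)
    intro x hx
    rw [interior_Icc] at hx
    rw [(hh1 x).deriv]
    have : h2 η < h2 x := hanti (le_of_lt hx.1) hηmem hx.2
    linarith [hη2]
  -- h1 is antitone on [η, ∞)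
  have hanti1 : AntitoneOn h1 (Set.Ici η) := by
    apply antitoneOn_of_deriv_nonpos (convex_Ici η)
      (fun x _ => ((hh1 x).differentiableAt).continuousAt.continuousWithinAt)
      (fun x _ => ((hh1 x).differentiableAt).differentiableWithinAt)
    intro x hx
    rw [interior_Ici] at hx
    rw [(hh1 x).deriv]
    have : h2 x < h2 η := hanti hηmem (Set.mem_Ici.mpr (le_trans (Set.mem_Ici.mp hηmem) (le_of_lt hx))) hx
    linarith [hη2]
  -- h is antitone on [y0, ξ]
  have hantih : AntitoneOn h (Set.Icc y0 ξ) := by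
    apply antitoneOn_of_deriv_nonpos (convex_Icc y0 ξ)
      (fun x _ => ((hh x).differentiableAt).continuousAt.continuousWithinAt)
      (fun x _ => ((hh x).differentiableAt).differentiableWithinAt)
    intro x hx
    rw [interior_Icc] at hx
    rw [(hh x).deriv]
    have : h1 x ≤ h1 ξ := hmono1 ⟨le_of_lt hx.1, le_of_lt (lt_trans hx.2 hξη)⟩
      ⟨le_of_lt hy0ξ, le_of_lt hξη⟩ (le_of_lt hx.2)
    linarith [hξ1]
  -- h is monotone on [ξ, y]
  have hmonoh : MonotoneOn h (Set.Icc ξ y) := by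
    apply monotoneOn_of_deriv_nonneg (convex_Icc ξ y)
      (fun x _ => ((hh x).differentiableAt).continuousAt.continuousWithinAt)
      (fun x _ => ((hh x).differentiableAt).differentiableWithinAt)
    intro x hx
    rw [interior_Icc] at hx
    rw [(hh x).deriv]
    rcases le_or_gt x η with hxη | hxη
    · have : h1 ξ ≤ h1 x := hmono1 ⟨le_of_lt hy0ξ, le_of_lt hξη⟩
        ⟨le_of_lt (lt_trans hy0ξ hx.1), hxη⟩ (le_of_lt hx.1)
      linarith [hξ1]
    · have : h1 y ≤ h1 x := hanti1 (le_of_lt hxη) (le_of_lt hηy) (le_of_lt hx.2)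
      linarith [hh1y]
  -- h is antitone on [y, ∞)
  have hantih2 : AntitoneOn h (Set.Ici y) := by
    apply antitoneOn_of_deriv_nonpos (convex_Ici y)
      (fun x _ => ((hh x).differentiableAt).continuousAt.continuousWithinAt)
      (fun x _ => ((hh x).differentiableAt).differentiableWithinAt)
    intro x hx
    rw [interior_Ici] at hx
    rw [(hh x).deriv]
    have : h1 x ≤ h1 y := hanti1 (le_of_lt hηy) (le_of_lt (lt_trans hηy hx)) (le_of_lt hx)
    linarith [hh1y]
  -- conclude
  intro t ht
  have hht : h t ≤ 0 := by
    rcases le_or_gt t ξ with htξ | htξ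
    · have := hantih (Set.left_mem_Icc.mpr (le_of_lt hy0ξ)) ⟨ht, htξ⟩ ht
      linarith [hhy0]
    · rcases le_or_gt t y with hty | hty
      · have := hmonoh ⟨le_of_lt htξ, hty⟩ (Set.right_mem_Icc.mpr (le_of_lt hξ.2)) hty
        linarith [hhy]
      · have := hantih2 (Set.self_mem_Ici) (le_of_lt hty) (le_of_lt hty)
        linarith [hhy]
  have : Real.log (G t) - (a * t ^ 2 + b * t + c) ≤ 0 := hht
  linarith [this]

theorem stmt_5 (L y0 y1 y : ℝ) (hL0 : 0 < L) (hL1 : L < 1)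
    (h0 : Real.log (1 / L - 1) < y0) (h01 : y0 < y1) (hy : y0 < y)
    (n : ℕ) (Y : Fin n → ℝ) (hY : ∀ i, y0 ≤ Y i ∧ Y i ≤ y1)
    (a b c m1 m2 : ℝ)
    (ha : a = (1 / (y - y0)) *
      (Real.log ((1 + L * (Real.exp y0 - 1)) / (1 + L * (Real.exp y - 1))) / (y - y0)
        + L * Real.exp y / (1 + L * (Real.exp y - 1))))
    (hb : b = L * Real.exp y / (1 + L * (Real.exp y - 1)) - 2 * a * y)
    (hc : c = Real.log (1 + L * (Real.exp y0 - 1)) - a * y0 ^ 2 - b * y0)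
    (hm1 : m1 = (1 / (n : ℝ)) * ∑ i, Y i)
    (hm2 : m2 = (1 / (n : ℝ)) * ∑ i, (Y i) ^ 2) :
    ∑ i, Real.log (1 + L * (Real.exp (Y i) - 1)) ≤ (n : ℝ) * (a * m2 + b * m1 + c) := by
  have key := quad_upper L y0 y a b c hL0 hL1 h0 hy ha hb hc
  have hsum : ∑ i, Real.log (1 + L * (Real.exp (Y i) - 1))
      ≤ ∑ i, (a * (Y i) ^ 2 + b * (Y i) + c) :=
    Finset.sum_le_sum fun i _ => key (Y i) (hY i).1
  have hsplit : ∑ i, (a * (Y i) ^ 2 + b * (Y i) + c)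
      = a * ∑ i, (Y i) ^ 2 + b * ∑ i, Y i + (n : ℝ) * c := by
    simp [Finset.sum_add_distrib, Finset.mul_sum, Finset.sum_const, Finset.card_univ,
      nsmul_eq_mul]
  rcases Nat.eq_zero_or_pos n with hn | hn
  · subst hn
    simpa using hsum
  · have hn' : (n : ℝ) ≠ 0 := Nat.cast_ne_zero.mpr hn.ne'
    have hRHS : (n : ℝ) * (a * m2 + b * m1 + c)
        = a * ∑ i, (Y i) ^ 2 + b * ∑ i, Y i + (n : ℝ) * c := by
      rw [hm1, hm2]
      field_simp
    rw [hRHS, ← hsplit]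
    exact hsum
end

section
/- Fix a real L < 0 and reals y_0, y_1 with y_0 < y_1 < log(1 − 1/L), and fix any y < y_1. Let Y_1, …, Y_n be reals with y_0 ≤ Y_i ≤ y_1 for all i. Then n·(a_1·m_2 + b_1·m_1 + c_1) ≤ Σ_{i=1}^n log(1 + L·(e^{Y_i} − 1)), where a_1, b_1, c_1 are the quadratic coefficients determined by L, y and y_1. (This is the lower bound of Theorem 4.) -/
open Real Set

noncomputable def Ff (L t : ℝ) : ℝ := Real.log (1 + L * (Real.exp t - 1))
noncomputable def Hh (L a b c t : ℝ) : ℝ := Ff L t - (a * t ^ 2 + b * t + c)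
noncomputable def Gg (L a b t : ℝ) : ℝ :=
  L * Real.exp t / (1 + L * (Real.exp t - 1)) - (2 * a * t + b)
noncomputable def G2 (L a t : ℝ) : ℝ :=
  L * (1 - L) * Real.exp t / (1 + L * (Real.exp t - 1)) ^ 2 - 2 * a
noncomputable def G3 (L t : ℝ) : ℝ :=
  L * (1 - L) * Real.exp t * ((1 - L) - L * Real.exp t) / (1 + L * (Real.exp t - 1)) ^ 3

lemma Dpos_s6 {L t : ℝ} (hL : L < 0) (ht : t < Real.log (1 - 1 / L)) :
    0 < 1 + L * (Real.exp t - 1) := by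
  have h1 : (0 : ℝ) < 1 - 1 / L := by
    have : 1 / L < 0 := div_neg_of_pos_of_neg one_pos hL
    linarith
  have h2 : Real.exp t < 1 - 1 / L := by
    calc Real.exp t < Real.exp (Real.log (1 - 1 / L)) := Real.exp_lt_exp.2 ht
    _ = 1 - 1 / L := Real.exp_log h1
  have h3 : L * (1 - 1 / L) < L * Real.exp t := mul_lt_mul_of_neg_left h2 hL
  have h4 : L * (1 - 1 / L) = L - 1 := by
    have hL0 : L ≠ 0 := ne_of_lt hL
    field_simp
  nlinarith

lemma hasDerivAt_inner (L t : ℝ) :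
    HasDerivAt (fun s => 1 + L * (Real.exp s - 1)) (L * Real.exp t) t := by
  exact (((Real.hasDerivAt_exp t).sub_const 1).const_mul L).const_add 1

lemma hasDerivAt_Hh (L a b c t : ℝ) (hD : 0 < 1 + L * (Real.exp t - 1)) :
    HasDerivAt (Hh L a b c) (Gg L a b t) t := by
  have h1 : HasDerivAt (Ff L) (L * Real.exp t / (1 + L * (Real.exp t - 1))) t := by
    exact (hasDerivAt_inner L t).log (ne_of_gt hD)
  have h2 : HasDerivAt (fun s : ℝ => a * s ^ 2 + b * s + c) (2 * a * t + b) t := by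
    have := (((hasDerivAt_pow 2 t).const_mul a).add ((hasDerivAt_id t).const_mul b)).add_const c
    refine this.congr_deriv ?_
    simp
    ring
  exact h1.sub h2

lemma hasDerivAt_Gg (L a b t : ℝ) (hD : 0 < 1 + L * (Real.exp t - 1)) :
    HasDerivAt (Gg L a b) (G2 L a t) t := by
  have hu : HasDerivAt (fun s : ℝ => L * Real.exp s) (L * Real.exp t) t :=
    (Real.hasDerivAt_exp t).const_mul L
  have hdiv := hu.div (hasDerivAt_inner L t) (ne_of_gt hD)
  have h2 : HasDerivAt (fun s : ℝ => 2 * a * s + b) (2 * a) t := by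
    simpa using ((hasDerivAt_id t).const_mul (2 * a)).add_const b
  have h3 := hdiv.sub h2
  refine h3.congr_deriv ?_
  have hne : (1 + L * (Real.exp t - 1)) ≠ 0 := ne_of_gt hD
  simp only [G2]
  field_simp
  ring

lemma hasDerivAt_G2 (L a t : ℝ) (hD : 0 < 1 + L * (Real.exp t - 1)) :
    HasDerivAt (G2 L a) (G3 L t) t := by
  have hu : HasDerivAt (fun s : ℝ => L * (1 - L) * Real.exp s) (L * (1 - L) * Real.exp t) t :=
    (Real.hasDerivAt_exp t).const_mul (L * (1 - L))
  have hv : HasDerivAt (fun s : ℝ => (1 + L * (Real.exp s - 1)) ^ 2)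
      (2 * (1 + L * (Real.exp t - 1)) ^ 1 * (L * Real.exp t)) t := (hasDerivAt_inner L t).pow 2
  have hvne : (1 + L * (Real.exp t - 1)) ^ 2 ≠ 0 := pow_ne_zero 2 (ne_of_gt hD)
  have hdiv := (hu.div hv hvne).sub_const (2 * a)
  refine hdiv.congr_deriv ?_
  have hne : (1 + L * (Real.exp t - 1)) ≠ 0 := ne_of_gt hD
  simp only [G3]
  field_simp
  ring

lemma G3_neg {L t : ℝ} (hL : L < 0) (hD : 0 < 1 + L * (Real.exp t - 1)) : G3 L t < 0 := by
  have he : 0 < Real.exp t := Real.exp_pos t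
  have h1 : L * (1 - L) < 0 := mul_neg_of_neg_of_pos hL (by linarith)
  have h2 : 0 < (1 - L) - L * Real.exp t := by nlinarith
  have hnum : L * (1 - L) * Real.exp t * ((1 - L) - L * Real.exp t) < 0 :=
    mul_neg_of_neg_of_pos (mul_neg_of_neg_of_pos h1 he) h2
  exact div_neg_of_neg_of_pos hnum (pow_pos hD 3)

lemma key_s6 (L a b c y y1 : ℝ) (hL : L < 0) (hy : y < y1) (h1 : y1 < Real.log (1 - 1 / L))
    (hHy : Hh L a b c y = 0) (hHy1 : Hh L a b c y1 = 0) (hGy : Gg L a b y = 0) :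
    ∀ t, t ≤ y1 → 0 ≤ Hh L a b c t := by
  set yc := Real.log (1 - 1 / L) with hycdef
  have hy1c : y1 < yc := h1
  have hyc : y < yc := hy.trans hy1c
  have hDp : ∀ t : ℝ, t < yc → 0 < 1 + L * (Real.exp t - 1) := fun t ht => Dpos_s6 hL ht
  have hH : ∀ t : ℝ, t < yc → HasDerivAt (Hh L a b c) (Gg L a b t) t :=
    fun t ht => hasDerivAt_Hh L a b c t (hDp t ht)
  have hG : ∀ t : ℝ, t < yc → HasDerivAt (Gg L a b) (G2 L a t) t :=
    fun t ht => hasDerivAt_Gg L a b t (hDp t ht)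
  -- Rolle point
  obtain ⟨z, hz, hGz⟩ := exists_hasDerivAt_eq_zero hy
    (fun t ht => (hH t (lt_of_le_of_lt ht.2 hy1c)).continuousAt.continuousWithinAt)
    (hHy.trans hHy1.symm)
    (fun x hx => hH x (hx.2.trans hy1c))
  -- strict concavity of Gg on Iio yc
  have hconc : StrictConcaveOn ℝ (Iio yc) (Gg L a b) := by
    apply strictConcaveOn_of_deriv2_neg (convex_Iio yc)
      (fun t ht => (hG t ht).continuousAt.continuousWithinAt)
    intro x hx
    rw [interior_Iio] at hx
    have hev : deriv (Gg L a b) =ᶠ[nhds x] G2 L a := by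
      filter_upwards [Iio_mem_nhds hx] with t ht
      exact (hG t ht).deriv
    have h2 : deriv (deriv (Gg L a b)) x = deriv (G2 L a) x := hev.deriv_eq
    show deriv (deriv (Gg L a b)) x < 0
    rw [h2, (hasDerivAt_G2 L a x (hDp x hx)).deriv]
    exact G3_neg hL (hDp x hx)
  have hyI : y ∈ Iio yc := hyc
  have hzI : z ∈ Iio yc := hz.2.trans hy1c
  have hyz : y < z := hz.1
  -- sign of Gg
  have signIn : ∀ t, y < t → t < z → 0 < Gg L a b t := by
    intro t h1t h2t
    have hzy : 0 < z - y := by linarith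
    have hlam : 0 < (z - t) / (z - y) := div_pos (by linarith) hzy
    have hmu : 0 < (t - y) / (z - y) := div_pos (by linarith) hzy
    have hsum : (z - t) / (z - y) + (t - y) / (z - y) = 1 := by field_simp; ring
    have hcomb : (z - t) / (z - y) * y + (t - y) / (z - y) * z = t := by
      field_simp; ring
    have := hconc.2 hyI hzI (ne_of_lt hyz) hlam hmu hsum
    simp only [smul_eq_mul] at this
    rw [hcomb, hGy, hGz] at this
    simpa using this
  have signLeft : ∀ t, t < y → Gg L a b t < 0 := by
    intro t htl
    have htI : t ∈ Iio yc := htl.trans hyc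
    have hzt : 0 < z - t := by linarith
    have hlam : 0 < (z - y) / (z - t) := div_pos (by linarith) hzt
    have hmu : 0 < (y - t) / (z - t) := div_pos (by linarith) hzt
    have hsum : (z - y) / (z - t) + (y - t) / (z - t) = 1 := by field_simp; ring
    have hcomb : (z - y) / (z - t) * t + (y - t) / (z - t) * z = y := by
      field_simp; ring
    have := hconc.2 htI hzI (by linarith : t ≠ z) hlam hmu hsum
    simp only [smul_eq_mul] at this
    rw [hcomb, hGy, hGz] at this
    simp only [mul_zero, add_zero] at this
    nlinarith
  have signRight : ∀ t, z < t → t < yc → Gg L a b t < 0 := by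
    intro t h1t h2t
    have htI : t ∈ Iio yc := h2t
    have hty : 0 < t - y := by linarith
    have hlam : 0 < (t - z) / (t - y) := div_pos (by linarith) hty
    have hmu : 0 < (z - y) / (t - y) := div_pos (by linarith) hty
    have hsum : (t - z) / (t - y) + (z - y) / (t - y) = 1 := by field_simp; ring
    have hcomb : (t - z) / (t - y) * y + (z - y) / (t - y) * t = z := by
      field_simp; ring
    have := hconc.2 hyI htI (by linarith : y ≠ t) hlam hmu hsum
    simp only [smul_eq_mul] at this
    rw [hcomb, hGy, hGz] at this
    simp only [mul_zero, zero_add] at this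
    nlinarith
  -- monotonicity pieces
  have hM1 : AntitoneOn (Hh L a b c) (Iic y) := by
    apply antitoneOn_of_deriv_nonpos (convex_Iic y)
      (fun t ht => (hH t (lt_of_le_of_lt ht hyc)).continuousAt.continuousWithinAt)
    · intro t ht
      rw [interior_Iic] at ht
      exact (hH t (ht.trans hyc)).differentiableAt.differentiableWithinAt
    · intro t ht
      rw [interior_Iic] at ht
      rw [(hH t (ht.trans hyc)).deriv]
      exact le_of_lt (signLeft t ht)
  have hM2 : MonotoneOn (Hh L a b c) (Icc y z) := by
    apply monotoneOn_of_deriv_nonneg (convex_Icc y z)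
      (fun t ht => (hH t (lt_of_le_of_lt ht.2 hzI)).continuousAt.continuousWithinAt)
    · intro t ht
      rw [interior_Icc] at ht
      exact (hH t (ht.2.trans hzI)).differentiableAt.differentiableWithinAt
    · intro t ht
      rw [interior_Icc] at ht
      rw [(hH t (ht.2.trans hzI)).deriv]
      exact le_of_lt (signIn t ht.1 ht.2)
  have hM3 : AntitoneOn (Hh L a b c) (Icc z y1) := by
    apply antitoneOn_of_deriv_nonpos (convex_Icc z y1)
      (fun t ht => (hH t (lt_of_le_of_lt ht.2 hy1c)).continuousAt.continuousWithinAt)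
    · intro t ht
      rw [interior_Icc] at ht
      exact (hH t (ht.2.trans hy1c)).differentiableAt.differentiableWithinAt
    · intro t ht
      rw [interior_Icc] at ht
      rw [(hH t (ht.2.trans hy1c)).deriv]
      exact le_of_lt (signRight t ht.1 (ht.2.trans hy1c))
  -- combine
  intro t ht
  rcases le_or_gt t y with h' | h'
  · have := hM1 (mem_Iic.2 h') (mem_Iic.2 le_rfl) h'
    rw [hHy] at this; linarith
  rcases le_or_gt t z with h'' | h''
  · have := hM2 (left_mem_Icc.2 (le_of_lt hyz)) ⟨le_of_lt h', h''⟩ (le_of_lt h')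
    rw [hHy] at this; linarith
  · have := hM3 ⟨le_of_lt h'', ht⟩ (right_mem_Icc.2 (le_of_lt hz.2)) ht
    rw [hHy1] at this; linarith

theorem stmt_6 (L y0 y1 y : ℝ) (hL : L < 0)
    (h01 : y0 < y1) (h1 : y1 < Real.log (1 - 1 / L)) (hy : y < y1)
    (n : ℕ) (Y : Fin n → ℝ) (hY : ∀ i, y0 ≤ Y i ∧ Y i ≤ y1)
    (a b c m1 m2 : ℝ)
    (ha : a = (1 / (y - y1)) *
      (Real.log ((1 + L * (Real.exp y1 - 1)) / (1 + L * (Real.exp y - 1))) / (y - y1)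
        + L * Real.exp y / (1 + L * (Real.exp y - 1))))
    (hb : b = L * Real.exp y / (1 + L * (Real.exp y - 1)) - 2 * a * y)
    (hc : c = Real.log (1 + L * (Real.exp y1 - 1)) - a * y1 ^ 2 - b * y1)
    (hm1 : m1 = (1 / (n : ℝ)) * ∑ i, Y i)
    (hm2 : m2 = (1 / (n : ℝ)) * ∑ i, (Y i) ^ 2) :
    (n : ℝ) * (a * m2 + b * m1 + c) ≤ ∑ i, Real.log (1 + L * (Real.exp (Y i) - 1)) := by
  have hDy : 0 < 1 + L * (Real.exp y - 1) := Dpos_s6 hL (hy.trans h1)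
  have hDy1 : 0 < 1 + L * (Real.exp y1 - 1) := Dpos_s6 hL h1
  have hne : y - y1 ≠ 0 := sub_ne_zero.2 (ne_of_lt hy)
  have hlogdiv : Real.log ((1 + L * (Real.exp y1 - 1)) / (1 + L * (Real.exp y - 1)))
      = Ff L y1 - Ff L y := Real.log_div (ne_of_gt hDy1) (ne_of_gt hDy)
  rw [hlogdiv] at ha
  have K : a * (y - y1) ^ 2
      = (Ff L y1 - Ff L y) + (L * Real.exp y / (1 + L * (Real.exp y - 1))) * (y - y1) := by
    rw [ha]; field_simp
  have hHy : Hh L a b c y = 0 := by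
    simp only [Hh]
    rw [hb, hc]
    have hFy1 : Real.log (1 + L * (Real.exp y1 - 1)) = Ff L y1 := rfl
    rw [hFy1]
    nlinarith [K]
  have hHy1 : Hh L a b c y1 = 0 := by
    simp only [Hh, Ff]
    rw [hc]; ring
  have hGy : Gg L a b y = 0 := by
    simp only [Gg]; rw [hb]; ring
  have hkey := key_s6 L a b c y y1 hL hy h1 hHy hHy1 hGy
  have hterm : ∀ i, a * (Y i) ^ 2 + b * (Y i) + c ≤ Real.log (1 + L * (Real.exp (Y i) - 1)) := by
    intro i
    have := hkey (Y i) (hY i).2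
    simp only [Hh, Ff] at this
    linarith
  have hsum : ∑ i, (a * (Y i) ^ 2 + b * (Y i) + c)
      ≤ ∑ i, Real.log (1 + L * (Real.exp (Y i) - 1)) :=
    Finset.sum_le_sum fun i _ => hterm i
  have hlhs : (n : ℝ) * (a * m2 + b * m1 + c) = ∑ i, (a * (Y i) ^ 2 + b * (Y i) + c) := by
    rw [hm1, hm2]
    rcases eq_or_ne n 0 with h0 | h0
    · subst h0; simp
    · have hn : (n : ℝ) ≠ 0 := Nat.cast_ne_zero.2 h0
      rw [Finset.sum_add_distrib, Finset.sum_add_distrib, ← Finset.mul_sum, ← Finset.mul_sum,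
        Finset.sum_const, Finset.card_univ, Fintype.card_fin, nsmul_eq_mul]
      field_simp
  linarith
end

section
/- Fix a real L > 1 and reals y, y_1 with log(1 − 1/L) < y < y_1. Let p(x) = a_1·x² + b_1·x + c_1 with a_1, b_1, c_1 the quadratic coefficients determined by L, y and y_1, and let f(x) = log(1 + L·(e^x − 1)). Then f(x) ≤ p(x) for every x with log(1 − 1/L) < x ≤ y_1. (Pointwise quadratic upper bound used in the proof of Theorem 1; p agrees with f at y_1 and at y and has the same derivative as f at y.) -/
lemma concave_between {s : Set ℝ} {f : ℝ → ℝ} (h : StrictConcaveOn ℝ s f)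
    {p q x : ℝ} (hp : p ∈ s) (hq : q ∈ s) (hfp : f p = 0) (hfq : f q = 0)
    (hpx : p < x) (hxq : x < q) : 0 < f x := by
  have hpq : p < q := hpx.trans hxq
  have h1 : 0 < q - p := by linarith
  have ht0 : 0 < (q - x) / (q - p) := div_pos (by linarith) h1
  have ht1 : 0 < (x - p) / (q - p) := div_pos (by linarith) h1
  have hsum : (q - x) / (q - p) + (x - p) / (q - p) = 1 := by field_simp; ring
  have h2 := h.2 hp hq hpq.ne ht0 ht1 hsum
  simp only [smul_eq_mul] at h2
  have hx : (q - x) / (q - p) * p + (x - p) / (q - p) * q = x := by field_simp; ring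
  rw [hx, hfp, hfq, mul_zero, mul_zero, add_zero] at h2
  exact h2

lemma concave_left {s : Set ℝ} {f : ℝ → ℝ} (h : StrictConcaveOn ℝ s f)
    {p q x : ℝ} (hx : x ∈ s) (hq : q ∈ s) (hfp : f p = 0) (hfq : f q = 0)
    (hxp : x < p) (hpq : p < q) : f x < 0 := by
  have h1 : 0 < q - x := by linarith
  have ht0 : 0 < (q - p) / (q - x) := div_pos (by linarith) h1
  have ht1 : 0 < (p - x) / (q - x) := div_pos (by linarith) h1
  have hsum : (q - p) / (q - x) + (p - x) / (q - x) = 1 := by field_simp; ring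
  have h2 := h.2 hx hq (by intro he; rw [he] at hxp; linarith) ht0 ht1 hsum
  simp only [smul_eq_mul] at h2
  have hp' : (q - p) / (q - x) * x + (p - x) / (q - x) * q = p := by field_simp; ring
  rw [hp', hfp, hfq, mul_zero, add_zero] at h2
  nlinarith

lemma concave_right {s : Set ℝ} {f : ℝ → ℝ} (h : StrictConcaveOn ℝ s f)
    {p q x : ℝ} (hp : p ∈ s) (hx : x ∈ s) (hfp : f p = 0) (hfq : f q = 0)
    (hpq : p < q) (hqx : q < x) : f x < 0 := by
  have h1 : 0 < x - p := by linarith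
  have ht0 : 0 < (x - q) / (x - p) := div_pos (by linarith) h1
  have ht1 : 0 < (q - p) / (x - p) := div_pos (by linarith) h1
  have hsum : (x - q) / (x - p) + (q - p) / (x - p) = 1 := by field_simp; ring
  have h2 := h.2 hp hx (by intro he; rw [he] at hpq; linarith) ht0 ht1 hsum
  simp only [smul_eq_mul] at h2
  have hq' : (x - q) / (x - p) * p + (q - p) / (x - p) * x = q := by field_simp; ring
  rw [hq', hfp, hfq, mul_zero, zero_add] at h2
  nlinarith

theorem stmt_9 (L y y1 : ℝ) (hL : 1 < L)
    (hy : Real.log (1 - 1 / L) < y) (hy1 : y < y1)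
    (a b c : ℝ)
    (ha : a = (1 / (y - y1)) *
      (Real.log ((1 + L * (Real.exp y1 - 1)) / (1 + L * (Real.exp y - 1))) / (y - y1)
        + L * Real.exp y / (1 + L * (Real.exp y - 1))))
    (hb : b = L * Real.exp y / (1 + L * (Real.exp y - 1)) - 2 * a * y)
    (hc : c = Real.log (1 + L * (Real.exp y1 - 1)) - a * y1 ^ 2 - b * y1) :
    ∀ x : ℝ, Real.log (1 - 1 / L) < x → x ≤ y1 →
      Real.log (1 + L * (Real.exp x - 1)) ≤ a * x ^ 2 + b * x + c := by
  set l := Real.log (1 - 1 / L) with hldef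
  have hL0 : (0:ℝ) < L := by linarith
  have h1L : (0:ℝ) < 1 - 1 / L := by
    have : 1 / L < 1 := by rw [div_lt_one hL0]; exact hL
    linarith
  have hupos : ∀ z : ℝ, l < z → 0 < 1 + L * (Real.exp z - 1) := by
    intro z hz
    have h2 : 1 - 1 / L < Real.exp z := by
      calc 1 - 1 / L = Real.exp l := (Real.exp_log h1L).symm
        _ < Real.exp z := Real.exp_lt_exp.2 hz
    have h3 : L * (1 - 1 / L) < L * Real.exp z := by
      exact mul_lt_mul_of_pos_left h2 hL0
    have h4 : L * (1 - 1 / L) = L - 1 := by field_simp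
    nlinarith
  set g : ℝ → ℝ := fun z => a * z ^ 2 + b * z + c - Real.log (1 + L * (Real.exp z - 1))
    with hgdef
  set g1 : ℝ → ℝ := fun z => 2 * a * z + b - L * Real.exp z / (1 + L * (Real.exp z - 1))
    with hg1def
  set g2 : ℝ → ℝ := fun z => 2 * a - L * Real.exp z * (1 - L) / (1 + L * (Real.exp z - 1)) ^ 2
    with hg2def
  have hu' : ∀ z : ℝ, HasDerivAt (fun w => 1 + L * (Real.exp w - 1)) (L * Real.exp z) z := by
    intro z
    have heq : (fun w => 1 + L * (Real.exp w - 1)) = fun w => L * Real.exp w + (1 - L) := by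
      funext w; ring
    rw [heq]
    simpa using ((Real.hasDerivAt_exp z).const_mul L).add_const (1 - L)
  have hgd : ∀ z : ℝ, l < z → HasDerivAt g (g1 z) z := by
    intro z hz
    have hu := hupos z hz
    have hlog : HasDerivAt (fun w => Real.log (1 + L * (Real.exp w - 1)))
        (L * Real.exp z / (1 + L * (Real.exp z - 1))) z := (hu' z).log hu.ne'
    have hq : HasDerivAt (fun w : ℝ => a * w ^ 2 + b * w + c) (2 * a * z + b) z := by
      have h := (((hasDerivAt_pow 2 z).const_mul a).add ((hasDerivAt_id z).const_mul b)).add_const c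
      exact h.congr_deriv (by push_cast; ring)
    exact hq.sub hlog
  have hg1d : ∀ z : ℝ, l < z → HasDerivAt g1 (g2 z) z := by
    intro z hz
    have hu := hupos z hz
    have hdiv : HasDerivAt (fun w => L * Real.exp w / (1 + L * (Real.exp w - 1)))
        ((L * Real.exp z * (1 + L * (Real.exp z - 1)) - L * Real.exp z * (L * Real.exp z)) /
          (1 + L * (Real.exp z - 1)) ^ 2) z :=
      ((Real.hasDerivAt_exp z).const_mul L).div (hu' z) hu.ne'
    have hlin : HasDerivAt (fun w : ℝ => 2 * a * w + b) (2 * a) z := by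
      simpa using ((hasDerivAt_id z).const_mul (2 * a)).add_const b
    have h := hlin.sub hdiv
    have hnum : L * Real.exp z * (1 + L * (Real.exp z - 1)) - L * Real.exp z * (L * Real.exp z)
        = L * Real.exp z * (1 - L) := by ring
    rw [hnum] at h
    exact h
  have hg2anti : StrictAntiOn g2 (Set.Ioi l) := by
    intro x1 hx1 x2 hx2 h12
    have hu1 := hupos x1 hx1
    have hu2 := hupos x2 hx2
    have he : Real.exp x1 < Real.exp x2 := Real.exp_lt_exp.2 h12
    have he1 := Real.exp_pos x1
    have he2 := Real.exp_pos x2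
    have hB : (L - 1) * (L - 1) < (L * Real.exp x1) * (L * Real.exp x2) := by
      have h1 : L - 1 < L * Real.exp x1 := by nlinarith
      have h2 : L - 1 < L * Real.exp x2 := by nlinarith
      nlinarith
    have key : Real.exp x2 * (1 + L * (Real.exp x1 - 1)) ^ 2 <
        Real.exp x1 * (1 + L * (Real.exp x2 - 1)) ^ 2 := by
      nlinarith [mul_pos (sub_pos.2 he) (sub_pos.2 hB)]
    have h2 : L * Real.exp x1 * (1 - L) / (1 + L * (Real.exp x1 - 1)) ^ 2 <
        L * Real.exp x2 * (1 - L) / (1 + L * (Real.exp x2 - 1)) ^ 2 := by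
      rw [div_lt_div_iff₀ (by positivity) (by positivity)]
      nlinarith [mul_pos (mul_pos hL0 (sub_pos.2 hL)) (sub_pos.2 key)]
    simp only [hg2def]
    linarith
  have hconc : StrictConcaveOn ℝ (Set.Ioi l) g1 := by
    apply StrictAntiOn.strictConcaveOn_of_deriv (convex_Ioi l)
    · intro z hz
      exact (hg1d z hz).continuousAt.continuousWithinAt
    · rw [interior_Ioi]
      intro x1 h1 x2 h2 h12
      rw [(hg1d x1 h1).deriv, (hg1d x2 h2).deriv]
      exact hg2anti h1 h2 h12
  have hyI : y ∈ Set.Ioi l := hy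
  have hy1I : y1 ∈ Set.Ioi l := lt_trans hy hy1
  have huy := hupos y hy
  have huy1 := hupos y1 hy1I
  have hyy1 : y - y1 ≠ 0 := by intro h; apply absurd hy1; push_neg; linarith [sub_eq_zero.1 h]
  have hlogdiv : Real.log ((1 + L * (Real.exp y1 - 1)) / (1 + L * (Real.exp y - 1))) =
      Real.log (1 + L * (Real.exp y1 - 1)) - Real.log (1 + L * (Real.exp y - 1)) :=
    Real.log_div huy1.ne' huy.ne'
  have hgy1 : g y1 = 0 := by simp only [hgdef]; rw [hc]; ring
  have hakey : a * (y - y1) ^ 2 =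
      (Real.log (1 + L * (Real.exp y1 - 1)) - Real.log (1 + L * (Real.exp y - 1)))
        + L * Real.exp y / (1 + L * (Real.exp y - 1)) * (y - y1) := by
    rw [ha, hlogdiv]
    field_simp
  have hgy : g y = 0 := by
    simp only [hgdef]
    rw [hc, hb]
    linear_combination -hakey
  have hg1y : g1 y = 0 := by simp only [hg1def]; rw [hb]; ring
  have hcont : ContinuousOn g (Set.Icc y y1) := by
    intro z hz
    exact (hgd z (lt_of_lt_of_le hy hz.1)).continuousAt.continuousWithinAt
  obtain ⟨ξ, hξ, hg1ξ⟩ := exists_hasDerivAt_eq_zero hy1 hcont (hgy.trans hgy1.symm)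
    (fun z hz => hgd z (lt_trans hy hz.1))
  have hξI : ξ ∈ Set.Ioi l := lt_trans hy hξ.1
  -- sign facts for g1
  have hpos : ∀ z : ℝ, y < z → z < ξ → 0 < g1 z :=
    fun z h1 h2 => concave_between hconc hyI hξI hg1y hg1ξ h1 h2
  have hnegl : ∀ z : ℝ, l < z → z < y → g1 z < 0 :=
    fun z hz h1 => concave_left hconc hz hξI hg1y hg1ξ h1 hξ.1
  have hnegr : ∀ z : ℝ, ξ < z → l < z → g1 z < 0 :=
    fun z h1 hz => concave_right hconc hyI hz hg1y hg1ξ hξ.1 h1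
  -- conclude
  intro x hx hxle
  have hgoal : 0 ≤ g x → Real.log (1 + L * (Real.exp x - 1)) ≤ a * x ^ 2 + b * x + c := by
    intro h; simp only [hgdef] at h; linarith
  apply hgoal
  rcases le_total x y with hxy | hxy
  · -- antitone on Icc x y
    have hanti : AntitoneOn g (Set.Icc x y) := by
      apply antitoneOn_of_deriv_nonpos (convex_Icc x y)
      · intro z hz; exact (hgd z (lt_of_lt_of_le hx hz.1)).continuousAt.continuousWithinAt
      · intro z hz
        rw [interior_Icc] at hz
        exact ((hgd z (lt_trans hx hz.1)).differentiableAt).differentiableWithinAt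
      · intro z hz
        rw [interior_Icc] at hz
        rw [(hgd z (lt_trans hx hz.1)).deriv]
        exact le_of_lt (hnegl z (lt_trans hx hz.1) hz.2)
    have := hanti (Set.left_mem_Icc.2 hxy) (Set.right_mem_Icc.2 hxy) hxy
    rw [hgy] at this
    exact this
  · rcases le_total x ξ with hxξ | hxξ
    · have hmono : MonotoneOn g (Set.Icc y x) := by
        apply monotoneOn_of_deriv_nonneg (convex_Icc y x)
        · intro z hz; exact (hgd z (lt_of_lt_of_le hy hz.1)).continuousAt.continuousWithinAt
        · intro z hz
          rw [interior_Icc] at hz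
          exact ((hgd z (lt_trans hy hz.1)).differentiableAt).differentiableWithinAt
        · intro z hz
          rw [interior_Icc] at hz
          rw [(hgd z (lt_trans hy hz.1)).deriv]
          exact le_of_lt (hpos z hz.1 (lt_of_lt_of_le hz.2 hxξ))
      have := hmono (Set.left_mem_Icc.2 hxy) (Set.right_mem_Icc.2 hxy) hxy
      rw [hgy] at this
      exact this
    · have hanti : AntitoneOn g (Set.Icc x y1) := by
        apply antitoneOn_of_deriv_nonpos (convex_Icc x y1)
        · intro z hz; exact (hgd z (lt_of_lt_of_le hx hz.1)).continuousAt.continuousWithinAt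
        · intro z hz
          rw [interior_Icc] at hz
          exact ((hgd z (lt_trans hx hz.1)).differentiableAt).differentiableWithinAt
        · intro z hz
          rw [interior_Icc] at hz
          rw [(hgd z (lt_trans hx hz.1)).deriv]
          exact le_of_lt (hnegr z (lt_of_le_of_lt hxξ hz.1) (lt_trans hx hz.1))
      have := hanti (Set.left_mem_Icc.2 hxle) (Set.right_mem_Icc.2 hxle) hxle
      rw [hgy1] at this
      exact this
end

section
/- For f(x) = log(1 + L·(e^x − 1)) with L real, the third derivative of f at any x in the domain of f equals (1 − L)·L·(1 − L·(e^x + 1))·e^x / (1 + L·(e^x − 1))³. Consequently, for L > 1, the derivative f′(x) = L·e^x/(1 + L·(e^x − 1)) is strictly convex on the interval (log(1 − 1/L), ∞). -/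
open Real Set Filter

private lemma hgd (L x : ℝ) :
    HasDerivAt (fun t => 1 + L * (Real.exp t - 1)) (L * Real.exp x) x :=
  (((Real.hasDerivAt_exp x).sub_const 1).const_mul L).const_add 1

private lemma hU (L : ℝ) : IsOpen {t : ℝ | 0 < 1 + L * (Real.exp t - 1)} :=
  isOpen_lt continuous_const (by continuity)

private lemma hd1 (L x : ℝ) (h : 0 < 1 + L * (Real.exp x - 1)) :
    HasDerivAt (fun t => Real.log (1 + L * (Real.exp t - 1)))
      (L * Real.exp x / (1 + L * (Real.exp x - 1))) x :=
  (hgd L x).log h.ne'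

private lemma hd2 (L x : ℝ) (h : 0 < 1 + L * (Real.exp x - 1)) :
    HasDerivAt (fun t => L * Real.exp t / (1 + L * (Real.exp t - 1)))
      ((1 - L) * L * Real.exp x / (1 + L * (Real.exp x - 1)) ^ 2) x := by
  have := ((Real.hasDerivAt_exp x).const_mul L).div (hgd L x) h.ne'
  refine this.congr_deriv ?_
  field_simp [h.ne']
  ring

private lemma hd3 (L x : ℝ) (h : 0 < 1 + L * (Real.exp x - 1)) :
    HasDerivAt (fun t => (1 - L) * L * Real.exp t / (1 + L * (Real.exp t - 1)) ^ 2)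
      ((1 - L) * L * (1 - L * (Real.exp x + 1)) * Real.exp x /
        (1 + L * (Real.exp x - 1)) ^ 3) x := by
  have := ((Real.hasDerivAt_exp x).const_mul ((1 - L) * L)).div
    ((hgd L x).pow 2) (pow_ne_zero 2 h.ne')
  refine this.congr_deriv ?_
  simp only [Pi.pow_apply]
  field_simp [h.ne']
  ring

private lemma derA (L x : ℝ) (h : 0 < 1 + L * (Real.exp x - 1)) :
    deriv (fun t => Real.log (1 + L * (Real.exp t - 1))) x =
      L * Real.exp x / (1 + L * (Real.exp x - 1)) := (hd1 L x h).deriv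

private lemma derB (L x : ℝ) (h : 0 < 1 + L * (Real.exp x - 1)) :
    deriv (deriv (fun t => Real.log (1 + L * (Real.exp t - 1)))) x =
      (1 - L) * L * Real.exp x / (1 + L * (Real.exp x - 1)) ^ 2 := by
  have hev : deriv (fun t => Real.log (1 + L * (Real.exp t - 1)))
      =ᶠ[nhds x] fun t => L * Real.exp t / (1 + L * (Real.exp t - 1)) := by
    filter_upwards [(hU L).mem_nhds h] with y hy using derA L y hy
  rw [hev.deriv_eq, (hd2 L x h).deriv]

private lemma derC (L x : ℝ) (h : 0 < 1 + L * (Real.exp x - 1)) :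
    deriv (deriv (deriv (fun t => Real.log (1 + L * (Real.exp t - 1))))) x =
      (1 - L) * L * (1 - L * (Real.exp x + 1)) * Real.exp x /
        (1 + L * (Real.exp x - 1)) ^ 3 := by
  have hev : deriv (deriv (fun t => Real.log (1 + L * (Real.exp t - 1))))
      =ᶠ[nhds x] fun t => (1 - L) * L * Real.exp t / (1 + L * (Real.exp t - 1)) ^ 2 := by
    filter_upwards [(hU L).mem_nhds h] with y hy using derB L y hy
  rw [hev.deriv_eq, (hd3 L x h).deriv]

private lemma memU {L x : ℝ} (hL : 1 < L) (hx : x ∈ Set.Ioi (Real.log (1 - 1 / L))) :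
    0 < 1 + L * (Real.exp x - 1) := by
  have hL0 : (0:ℝ) < L := by linarith
  have h1 : (0:ℝ) < 1 - 1 / L := by
    have : 1 / L < 1 := by rw [div_lt_one hL0]; exact hL
    linarith
  have hxe : 1 - 1 / L < Real.exp x := by
    rw [← Real.exp_log h1]; exact Real.exp_lt_exp.2 hx
  have hlt : L * (1 - 1 / L) < L * Real.exp x := (mul_lt_mul_iff_right₀ hL0).2 hxe
  have hz : L * (1 - 1 / L) = L - 1 := by field_simp
  nlinarith

theorem stmt_10 :
    (∀ L x : ℝ, 0 < 1 + L * (Real.exp x - 1) →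
      iteratedDeriv 3 (fun t => Real.log (1 + L * (Real.exp t - 1))) x =
        (1 - L) * L * (1 - L * (Real.exp x + 1)) * Real.exp x /
          (1 + L * (Real.exp x - 1)) ^ 3) ∧
    (∀ L : ℝ, 1 < L →
      (∀ x ∈ Set.Ioi (Real.log (1 - 1 / L)),
        deriv (fun t => Real.log (1 + L * (Real.exp t - 1))) x =
          L * Real.exp x / (1 + L * (Real.exp x - 1))) ∧
      StrictConvexOn ℝ (Set.Ioi (Real.log (1 - 1 / L)))
        (fun x => L * Real.exp x / (1 + L * (Real.exp x - 1)))) := by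
  constructor
  · intro L x h
    have h3 : iteratedDeriv 3 (fun t => Real.log (1 + L * (Real.exp t - 1))) =
        deriv (deriv (deriv (fun t => Real.log (1 + L * (Real.exp t - 1))))) := by
      simp [iteratedDeriv_succ, iteratedDeriv_zero]
    rw [h3, derC L x h]
  · intro L hL
    refine ⟨fun x hx => derA L x (memU hL hx), ?_⟩
    apply strictConvexOn_of_deriv2_pos (convex_Ioi _)
    · intro x hx
      exact ((hd2 L x (memU hL hx)).continuousAt).continuousWithinAt
    · intro x hx
      rw [interior_Ioi] at hx
      have h := memU hL hx
      have h2 : (deriv^[2] fun x => L * Real.exp x / (1 + L * (Real.exp x - 1))) x =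
          (1 - L) * L * (1 - L * (Real.exp x + 1)) * Real.exp x /
            (1 + L * (Real.exp x - 1)) ^ 3 := by
        have hev : deriv (fun t => L * Real.exp t / (1 + L * (Real.exp t - 1)))
            =ᶠ[nhds x] fun t => (1 - L) * L * Real.exp t / (1 + L * (Real.exp t - 1)) ^ 2 := by
          filter_upwards [(hU L).mem_nhds h] with y hy using (hd2 L y hy).deriv
        rw [Function.iterate_succ, Function.iterate_one, Function.comp_apply,
          hev.deriv_eq, (hd3 L x h).deriv]
      rw [h2]
      have he := Real.exp_pos x
      have hL0 : (0:ℝ) < L := by linarith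
      have hnum : 0 < (1 - L) * L * (1 - L * (Real.exp x + 1)) * Real.exp x := by
        have ha : 0 < L - 1 := by linarith
        have hb : 0 < L * (Real.exp x + 1) - 1 := by nlinarith
        nlinarith [mul_pos (mul_pos ha hb) (mul_pos hL0 he)]
      positivity
end

section
/- Fix a real L < 0. The function f(x) = log(1 + L·(e^x − 1)) is well-defined on (−∞, log(1 − 1/L)), and its derivative f′(x) = L·e^x/(1 + L·(e^x − 1)) is strictly concave on (−∞, log(1 − 1/L)). -/
theorem stmt_12 (L : ℝ) (hL : L < 0) :
    (∀ x : ℝ, x < Real.log (1 - 1 / L) → 0 < 1 + L * (Real.exp x - 1)) ∧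
    (∀ x ∈ Set.Iio (Real.log (1 - 1 / L)),
      deriv (fun t => Real.log (1 + L * (Real.exp t - 1))) x =
        L * Real.exp x / (1 + L * (Real.exp x - 1))) ∧
    StrictConcaveOn ℝ (Set.Iio (Real.log (1 - 1 / L)))
      (fun x => L * Real.exp x / (1 + L * (Real.exp x - 1))) := by
  have hL1 : (0:ℝ) < 1 - 1 / L := by
    have : 1/L < 0 := div_neg_of_pos_of_neg one_pos hL
    linarith
  have hpos : ∀ x : ℝ, x < Real.log (1 - 1 / L) → 0 < 1 + L * (Real.exp x - 1) := by
    intro x hx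
    have hlt : Real.exp x < 1 - 1 / L := by
      rw [← Real.exp_log hL1]; exact Real.exp_lt_exp.mpr hx
    have : L * Real.exp x > L * (1 - 1/L) := by
      exact (mul_lt_mul_left_of_neg hL).mpr hlt
    have hLne : L ≠ 0 := ne_of_lt hL
    field_simp at this
    rw [mul_div_cancel_left₀ _ hLne] at this
    nlinarith
  set c := Real.log (1 - 1 / L) with hc
  -- derivative of D
  have hD : ∀ x : ℝ, HasDerivAt (fun t => 1 + L * (Real.exp t - 1)) (L * Real.exp x) x := by
    intro x
    simpa using (((Real.hasDerivAt_exp x).sub_const 1).const_mul L).const_add 1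
  -- derivative of g on Iio c
  have hg : ∀ x ∈ Set.Iio c, HasDerivAt (fun t => L * Real.exp t / (1 + L * (Real.exp t - 1)))
      ((1 - L) * L * Real.exp x / (1 + L * (Real.exp x - 1))^2) x := by
    intro x hx
    have hDx := hpos x hx
    have h1 : HasDerivAt (fun t => L * Real.exp t) (L * Real.exp x) x :=
      (Real.hasDerivAt_exp x).const_mul L
    have h := h1.fun_div (hD x) (ne_of_gt hDx)
    refine h.congr_deriv ?_
    field_simp
    ring
  -- derivative of φ on Iio c
  have hφ : ∀ x ∈ Set.Iio c, HasDerivAt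
      (fun t => (1 - L) * L * Real.exp t / (1 + L * (Real.exp t - 1))^2)
      ((1 - L) * L * Real.exp x * ((1 - L) - L * Real.exp x)
        / (1 + L * (Real.exp x - 1))^3) x := by
    intro x hx
    have hDx := hpos x hx
    have h1 : HasDerivAt (fun t => (1 - L) * L * Real.exp t) ((1 - L) * L * Real.exp x) x :=
      (Real.hasDerivAt_exp x).const_mul ((1 - L) * L)
    have h2 : HasDerivAt (fun t => (1 + L * (Real.exp t - 1))^2)
        (2 * (1 + L * (Real.exp x - 1)) * (L * Real.exp x)) x := by
      simpa using ((hD x).fun_pow 2)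
    have h := h1.fun_div h2 (by positivity)
    refine h.congr_deriv ?_
    field_simp
    ring
  refine ⟨hpos, ?_, ?_⟩
  · intro x hx
    have hDx := hpos x hx
    exact (((hD x).log (ne_of_gt hDx)).deriv)
  · apply strictConcaveOn_of_deriv2_neg (convex_Iio c)
    · intro x hx
      exact ((hg x hx).continuousAt).continuousWithinAt
    · intro x hx
      rw [interior_Iio] at hx
      have hDx := hpos x hx
      have hEq : deriv (fun t => L * Real.exp t / (1 + L * (Real.exp t - 1)))
          =ᶠ[nhds x] (fun t => (1 - L) * L * Real.exp t / (1 + L * (Real.exp t - 1))^2) := by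
        filter_upwards [Iio_mem_nhds hx] with y hy
        exact (hg y hy).deriv
      have : deriv^[2] (fun t => L * Real.exp t / (1 + L * (Real.exp t - 1))) x
          = (1 - L) * L * Real.exp x * ((1 - L) - L * Real.exp x)
            / (1 + L * (Real.exp x - 1))^3 := by
        simp only [Function.iterate_succ, Function.iterate_zero, Function.comp_apply, id]
        rw [hEq.deriv_eq]
        exact (hφ x hx).deriv
      rw [this]
      have h1 : (1 - L) * L * Real.exp x < 0 := by
        nlinarith [mul_pos (show (0:ℝ) < 1 - L by linarith) (Real.exp_pos x)]
      have h2 : 0 < (1 - L) - L * Real.exp x := by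
        have := Real.exp_pos x
        nlinarith
      have h3 : 0 < (1 + L * (Real.exp x - 1))^3 := by positivity
      exact div_neg_of_neg_of_pos (by nlinarith) h3
end

section
/- Fix a real L < 0. For every real y with y < log(1 − 1/L), we have log(1 + L·(e^y − 1)) ≤ L·y. Consequently, if Y_1, …, Y_n all satisfy Y_i < log(1 − 1/L), then Σ_{i=1}^n log(1 + L·(e^{Y_i} − 1)) ≤ L·Σ_{i=1}^n Y_i. -/
lemma key_exp_ineq (L y : ℝ) (hL : L < 0) :
    1 + L * (Real.exp y - 1) ≤ Real.exp (L * y) := by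
  have h1L : (0:ℝ) < 1 - L := by linarith
  have ha : (0:ℝ) ≤ 1 / (1 - L) := by positivity
  have hb : (0:ℝ) ≤ -L / (1 - L) := div_nonneg (by linarith) h1L.le
  have hab : 1 / (1 - L) + -L / (1 - L) = 1 := by field_simp; ring
  have h := convexOn_exp.2 (Set.mem_univ (L * y)) (Set.mem_univ y) ha hb hab
  simp only [smul_eq_mul] at h
  have harg : 1 / (1 - L) * (L * y) + -L / (1 - L) * y = 0 := by field_simp; ring
  rw [harg, Real.exp_zero] at h
  have hE : (0:ℝ) < Real.exp (L * y) := Real.exp_pos _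
  have hEy : (0:ℝ) < Real.exp y := Real.exp_pos _
  have h2 := mul_le_mul_of_nonneg_left h h1L.le
  field_simp at h2
  nlinarith

lemma key_log (L : ℝ) (hL : L < 0) (y : ℝ) (hy : y < Real.log (1 - 1 / L)) :
    Real.log (1 + L * (Real.exp y - 1)) ≤ L * y := by
  have h1 : (0:ℝ) < 1 - 1 / L := by
    have : 1 / L < 0 := div_neg_of_pos_of_neg one_pos hL
    linarith
  have hey : Real.exp y < 1 - 1 / L := by
    calc Real.exp y < Real.exp (Real.log (1 - 1/L)) := Real.exp_lt_exp.2 hy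
    _ = 1 - 1/L := Real.exp_log h1
  have hpos : 0 < 1 + L * (Real.exp y - 1) := by
    have hL' : L ≠ 0 := ne_of_lt hL
    have : L * (1 - 1/L) < L * Real.exp y := by
      exact mul_lt_mul_of_neg_left hey hL
    have hid : L * (1 - 1/L) = L - 1 := by field_simp
    nlinarith
  rw [Real.log_le_iff_le_exp hpos]
  exact key_exp_ineq L y hL

theorem stmt_14 (L : ℝ) (hL : L < 0) :
    (∀ y : ℝ, y < Real.log (1 - 1 / L) →
      Real.log (1 + L * (Real.exp y - 1)) ≤ L * y) ∧
    (∀ (n : ℕ) (Y : Fin n → ℝ), (∀ i, Y i < Real.log (1 - 1 / L)) →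
      ∑ i, Real.log (1 + L * (Real.exp (Y i) - 1)) ≤ L * ∑ i, Y i) := by
  refine ⟨fun y hy => key_log L hL y hy, fun n Y hY => ?_⟩
  rw [Finset.mul_sum]
  exact Finset.sum_le_sum fun i _ => key_log L hL (Y i) (hY i)
end

section
/- Fix reals L > 1, L_0 < L, and y_0, y_1 with log(1 − 1/L) < y_0 < 0 < y_1. Set a_0 = (1/y_0)·( log(1 + L·(e^{y_0} − 1))/y_0 − L ). Let Y_1, …, Y_n be reals with y_0 ≤ Y_i ≤ y_1 for all i, not all zero, and set m_1 = (1/n)·Σ Y_i and m_2 = (1/n)·Σ Y_i² (so m_2 > 0). If m_1/m_2 ≥ −a_0/(L − L_0), then L_0·Σ_{i=1}^n Y_i ≤ Σ_{i=1}^n log(1 + L·(e^{Y_i} − 1)); that is, the log-return of the L-times daily leveraged index is at least L_0 times the log-return of the benchmark index. -/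
open Real Set

-- positivity of the inner expression
lemma aux_P_pos (L : ℝ) (hL : 1 < L) {x : ℝ} (hx : Real.log (1 - 1 / L) < x) :
    0 < 1 + L * (Real.exp x - 1) := by
  have hL0 : (0:ℝ) < L := by linarith
  have h1 : (0:ℝ) < 1 - 1 / L := by
    have : 1 / L < 1 := by rw [div_lt_one hL0]; exact hL
    linarith
  have h2 : 1 - 1 / L < Real.exp x := by
    have := Real.exp_lt_exp.2 hx
    rwa [Real.exp_log h1] at this
  have h3 : L * (1 - 1 / L) < L * Real.exp x := by
    exact (mul_lt_mul_iff_right₀ hL0).2 h2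
  have h4 : L * (1 - 1 / L) = L - 1 := by field_simp
  nlinarith

-- pointwise key inequality
lemma aux_key (L y0 y1 : ℝ) (hL : 1 < L)
    (h0 : Real.log (1 - 1 / L) < y0) (hy0 : y0 < 0) (hy1 : 0 < y1)
    (a0 : ℝ) (ha0 : a0 * y0 ^ 2 = Real.log (1 + L * (Real.exp y0 - 1)) - L * y0) :
    ∀ x ∈ Set.Icc y0 y1, L * x + a0 * x ^ 2 ≤ Real.log (1 + L * (Real.exp x - 1)) := by
  set ℓ := Real.log (1 - 1 / L) with hldef
  set D : Set ℝ := Set.Ioi ℓ with hDdef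
  have hDopen : IsOpen D := isOpen_Ioi
  have hP : ∀ x ∈ D, 0 < 1 + L * (Real.exp x - 1) := fun x hx => aux_P_pos L hL hx
  set φ : ℝ → ℝ := fun x => Real.log (1 + L * (Real.exp x - 1)) - L * x - a0 * x ^ 2 with hφdef
  set ψ : ℝ → ℝ := fun x => L * Real.exp x / (1 + L * (Real.exp x - 1)) - L - 2 * a0 * x with hψdef
  set χ : ℝ → ℝ := fun x => L * Real.exp x * (1 - L) / (1 + L * (Real.exp x - 1)) ^ 2 - 2 * a0
    with hχdef
  have hPder : ∀ x : ℝ, HasDerivAt (fun y => 1 + L * (Real.exp y - 1)) (L * Real.exp x) x := by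
    intro x
    have h := ((Real.hasDerivAt_exp x).sub_const 1).const_mul L
    have h2 := h.const_add 1
    simpa using h2
  have hφ' : ∀ x ∈ D, HasDerivAt φ (ψ x) x := by
    intro x hx
    have hp := hP x hx
    have h2 : HasDerivAt (fun y => Real.log (1 + L * (Real.exp y - 1)))
        (L * Real.exp x / (1 + L * (Real.exp x - 1))) x := (hPder x).log hp.ne'
    have h3 : HasDerivAt (fun y : ℝ => L * y) L x := by
      simpa using (hasDerivAt_id x).const_mul L
    have h4 : HasDerivAt (fun y : ℝ => a0 * y ^ 2) (a0 * (2 * x)) x := by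
      simpa using ((hasDerivAt_pow 2 x).const_mul a0)
    have := (h2.sub h3).sub h4
    refine this.congr_deriv ?_
    simp only [hψdef]; ring
  have hψ' : ∀ x ∈ D, HasDerivAt ψ (χ x) x := by
    intro x hx
    have hp := hP x hx
    have hnum : HasDerivAt (fun y => L * Real.exp y) (L * Real.exp x) x := by
      simpa using (Real.hasDerivAt_exp x).const_mul L
    have hdiv := hnum.div (hPder x) hp.ne'
    have h3 : HasDerivAt (fun y : ℝ => 2 * a0 * y) (2 * a0) x := by
      simpa using (hasDerivAt_id x).const_mul (2 * a0)
    have h5 := (hdiv.sub_const L).sub h3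
    have h6 : HasDerivAt ψ (χ x) x := by
      refine h5.congr_deriv ?_
      simp only [hχdef]
      congr 2
      ring
    exact h6
  have hχmono : StrictMonoOn χ D := by
    intro x hx y hy hxy
    have hpx := hP x hx
    have hpy := hP y hy
    have hex : Real.exp x < Real.exp y := Real.exp_lt_exp.2 hxy
    simp only [hχdef]
    have key : L * Real.exp x * (1 - L) / (1 + L * (Real.exp x - 1)) ^ 2 <
        L * Real.exp y * (1 - L) / (1 + L * (Real.exp y - 1)) ^ 2 := by
      rw [div_lt_div_iff₀ (by positivity) (by positivity)]
      have ha1 : L - 1 < L * Real.exp x := by nlinarith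
      have hb1 : L - 1 < L * Real.exp y := by nlinarith
      have hL1 : (0:ℝ) < L - 1 := by linarith
      have hq : (L - 1) ^ 2 < (L * Real.exp x) * (L * Real.exp y) := by nlinarith
      have hkey : 0 < (L * (L - 1)) * ((Real.exp y - Real.exp x) *
          (L ^ 2 * Real.exp x * Real.exp y - (L - 1) ^ 2)) := by
        apply mul_pos (by nlinarith)
        apply mul_pos (by linarith)
        nlinarith
      nlinarith [hkey]
    linarith
  have hψcont : ContinuousOn ψ D := fun x hx => (hψ' x hx).continuousAt.continuousWithinAt
  have hderiv_eq : ∀ x ∈ D, deriv ψ x = χ x := fun x hx => (hψ' x hx).deriv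
  have hψconv : StrictConvexOn ℝ D ψ := by
    apply StrictMonoOn.strictConvexOn_of_deriv (convex_Ioi ℓ) hψcont
    rw [interior_Ioi]
    intro x hx y hy hxy
    rw [hderiv_eq x hx, hderiv_eq y hy]
    exact hχmono hx hy hxy
  have hy0D : y0 ∈ D := h0
  have h0D : (0:ℝ) ∈ D := lt_trans h0 hy0
  have hsub : Set.Icc y0 y1 ⊆ D := fun x hx => lt_of_lt_of_le h0 hx.1
  have hφy0 : φ y0 = 0 := by simp only [hφdef]; linarith [ha0]
  have hφ0 : φ 0 = 0 := by simp [hφdef]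
  have hψ0 : ψ 0 = 0 := by simp [hψdef]
  -- Rolle
  have hcont : ContinuousOn φ (Set.Icc y0 0) := by
    intro x hx
    exact (hφ' x (lt_of_lt_of_le h0 hx.1)).continuousAt.continuousWithinAt
  obtain ⟨c, hc, hψc⟩ := exists_hasDerivAt_eq_zero hy0 hcont (hφy0.trans hφ0.symm)
    (fun x hx => hφ' x (lt_of_lt_of_le h0 hx.1.le))
  have hcD : c ∈ D := lt_trans h0 hc.1
  -- sign of ψ
  have hsign_neg : ∀ x ∈ Set.Ioo c 0, ψ x < 0 := by
    intro x hx
    have hcne : c ≠ (0:ℝ) := ne_of_lt hc.2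
    have hxc : 0 < x / c := div_pos_of_neg_of_neg hx.2 hc.2
    have hxc1 : x / c < 1 := (div_lt_one_of_neg hc.2).2 hx.1
    have h := hψconv.2 hcD h0D hcne hxc (by linarith : 0 < 1 - x / c) (by ring)
    have hxeq : (x / c) • c + (1 - x / c) • (0:ℝ) = x := by
      simp only [smul_eq_mul]; field_simp; ring
    rw [hxeq] at h
    simp only [smul_eq_mul] at h
    rw [hψc, hψ0] at h
    simp only [mul_zero, add_zero, zero_add] at h
    exact h
  have hsign_posL : ∀ x ∈ Set.Ico y0 c, 0 < ψ x := by
    intro x hx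
    have hx0 : x < 0 := lt_trans hx.2 hc.2
    have hxne : x ≠ (0:ℝ) := ne_of_lt hx0
    have ht : 0 < c / x := div_pos_of_neg_of_neg hc.2 hx0
    have ht1 : c / x < 1 := (div_lt_one_of_neg hx0).2 hx.2
    have hxD : x ∈ D := lt_of_lt_of_le h0 hx.1
    have h := hψconv.2 hxD h0D hxne ht (by linarith : 0 < 1 - c / x) (by ring)
    have hxeq : (c / x) • x + (1 - c / x) • (0:ℝ) = c := by simp only [smul_eq_mul]; field_simp; ring
    rw [hxeq] at h
    simp only [smul_eq_mul] at h
    rw [hψc, hψ0] at h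
    rcases mul_pos_iff.1 (by linarith : (0:ℝ) < c / x * ψ x) with ⟨_, h2⟩ | ⟨h1, _⟩
    · exact h2
    · linarith
  have hsign_posR : ∀ x ∈ Set.Ioc 0 y1, 0 < ψ x := by
    intro x hx
    have hcx : c < x := lt_trans hc.2 hx.1
    have hcne : c ≠ x := ne_of_lt hcx
    have hden : 0 < x - c := by linarith
    have ht : 0 < x / (x - c) := div_pos hx.1 hden
    have ht1 : x / (x - c) < 1 := by
      rw [div_lt_one hden]
      linarith [hc.2]
    have hxD : x ∈ D := lt_trans (lt_trans h0 hy0) hx.1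
    have h := hψconv.2 hcD hxD hcne ht (by linarith : 0 < 1 - x / (x - c)) (by ring)
    have hxeq : (x / (x - c)) • c + (1 - x / (x - c)) • x = 0 := by
      field_simp
      ring
    rw [hxeq] at h
    simp only [smul_eq_mul] at h
    rw [hψc, hψ0] at h
    rcases mul_pos_iff.1 (by linarith : (0:ℝ) < (1 - x / (x - c)) * ψ x) with ⟨_, h2⟩ | ⟨h1, _⟩
    · exact h2
    · linarith
  -- monotonicity pieces
  have hφcontD : ∀ s : Set ℝ, s ⊆ D → ContinuousOn φ s := by
    intro s hs x hx
    exact (hφ' x (hs hx)).continuousAt.continuousWithinAt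
  have hφderiv : ∀ x ∈ D, deriv φ x = ψ x := fun x hx => (hφ' x hx).deriv
  have hsubA : Set.Icc y0 c ⊆ D := fun x hx => lt_of_lt_of_le h0 hx.1
  have hsubB : Set.Icc c 0 ⊆ D := fun x hx => lt_of_lt_of_le (Set.mem_Ioi.1 hcD) hx.1
  have hsubC : Set.Icc (0:ℝ) y1 ⊆ D := fun x hx => lt_of_lt_of_le (Set.mem_Ioi.1 h0D) hx.1
  have monoA : MonotoneOn φ (Set.Icc y0 c) := by
    apply monotoneOn_of_deriv_nonneg (convex_Icc y0 c) (hφcontD _ hsubA)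
    · intro x hx
      rw [interior_Icc] at hx
      exact ((hφ' x (hsubA (Set.Ioo_subset_Icc_self hx))).differentiableAt.differentiableWithinAt)
    · intro x hx
      rw [interior_Icc] at hx
      rw [hφderiv x (hsubA (Set.Ioo_subset_Icc_self hx))]
      exact (hsign_posL x ⟨hx.1.le, hx.2⟩).le
  have antiB : AntitoneOn φ (Set.Icc c 0) := by
    apply antitoneOn_of_deriv_nonpos (convex_Icc c 0) (hφcontD _ hsubB)
    · intro x hx
      rw [interior_Icc] at hx
      exact ((hφ' x (hsubB (Set.Ioo_subset_Icc_self hx))).differentiableAt.differentiableWithinAt)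
    · intro x hx
      rw [interior_Icc] at hx
      rw [hφderiv x (hsubB (Set.Ioo_subset_Icc_self hx))]
      exact (hsign_neg x hx).le
  have monoC : MonotoneOn φ (Set.Icc (0:ℝ) y1) := by
    apply monotoneOn_of_deriv_nonneg (convex_Icc 0 y1) (hφcontD _ hsubC)
    · intro x hx
      rw [interior_Icc] at hx
      exact ((hφ' x (hsubC (Set.Ioo_subset_Icc_self hx))).differentiableAt.differentiableWithinAt)
    · intro x hx
      rw [interior_Icc] at hx
      rw [hφderiv x (hsubC (Set.Ioo_subset_Icc_self hx))]
      exact (hsign_posR x ⟨hx.1, hx.2.le⟩).le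
  -- conclusion
  intro x hx
  have hφx : 0 ≤ φ x := by
    rcases le_or_gt x c with h1 | h1
    · have := monoA ⟨le_refl y0, hc.1.le⟩ ⟨hx.1, h1⟩ hx.1
      rw [hφy0] at this; exact this
    · rcases le_or_gt x 0 with h2 | h2
      · have := antiB ⟨h1.le, h2⟩ ⟨hc.2.le, le_refl (0:ℝ)⟩ h2
        rw [hφ0] at this; exact this
      · have := monoC ⟨le_refl (0:ℝ), hy1.le⟩ ⟨h2.le, hx.2⟩ h2.le
        rw [hφ0] at this; exact this
  simp only [hφdef] at hφx
  linarith

theorem stmt_16 (L L0 y0 y1 : ℝ) (hL : 1 < L) (hL0 : L0 < L)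
    (h0 : Real.log (1 - 1 / L) < y0) (hy0 : y0 < 0) (hy1 : 0 < y1)
    (a0 : ℝ) (ha0 : a0 = (1 / y0) * (Real.log (1 + L * (Real.exp y0 - 1)) / y0 - L))
    (n : ℕ) (Y : Fin n → ℝ) (hY : ∀ i, y0 ≤ Y i ∧ Y i ≤ y1)
    (hne : ∃ i, Y i ≠ 0)
    (m1 m2 : ℝ)
    (hm1 : m1 = (1 / (n : ℝ)) * ∑ i, Y i)
    (hm2 : m2 = (1 / (n : ℝ)) * ∑ i, (Y i) ^ 2)
    (hth : -a0 / (L - L0) ≤ m1 / m2) :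
    L0 * ∑ i, Y i ≤ ∑ i, Real.log (1 + L * (Real.exp (Y i) - 1)) := by
  have hy0ne : y0 ≠ 0 := ne_of_lt hy0
  have ha0' : a0 * y0 ^ 2 = Real.log (1 + L * (Real.exp y0 - 1)) - L * y0 := by
    rw [ha0]; field_simp
  have hkey := aux_key L y0 y1 hL h0 hy0 hy1 a0 ha0'
  -- pointwise bound on each term
  have hpt : ∀ i, L * Y i + a0 * (Y i) ^ 2 ≤ Real.log (1 + L * (Real.exp (Y i) - 1)) :=
    fun i => hkey (Y i) ⟨(hY i).1, (hY i).2⟩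
  have hsum : ∑ i, (L * Y i + a0 * (Y i) ^ 2) ≤
      ∑ i, Real.log (1 + L * (Real.exp (Y i) - 1)) :=
    Finset.sum_le_sum (fun i _ => hpt i)
  rw [Finset.sum_add_distrib, ← Finset.mul_sum, ← Finset.mul_sum] at hsum
  -- positivity facts
  obtain ⟨i0, hi0⟩ := hne
  have hnpos : 0 < (n : ℝ) := by
    have : 0 < n := i0.pos
    exact_mod_cast this
  have hS2pos : 0 < ∑ i, (Y i) ^ 2 := by
    apply Finset.sum_pos' (fun j _ => sq_nonneg _)
    exact ⟨i0, Finset.mem_univ i0, by positivity⟩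
  have hm2pos : 0 < m2 := by rw [hm2]; positivity
  have hLL0 : 0 < L - L0 := by linarith
  have hmul : -a0 * m2 ≤ m1 * (L - L0) := (div_le_div_iff₀ hLL0 hm2pos).1 hth
  rw [hm1, hm2] at hmul
  have hfin : -a0 * ∑ i, (Y i) ^ 2 ≤ (∑ i, Y i) * (L - L0) := by
    have h2 := mul_le_mul_of_nonneg_left hmul hnpos.le
    have hc : (n : ℝ) * (1 / (n : ℝ)) = 1 := by field_simp
    nlinarith [h2, hc]
  linarith
end

section
/- Fix a real L > 1 and reals y_0, y with log(1 − 1/L) < y_0 < y. Then the coefficient a_0 = (1/(y − y_0))·( log((1 + L·(e^{y_0} − 1))/(1 + L·(e^y − 1)))/(y − y_0) + L·e^y/(1 + L·(e^y − 1)) ) is strictly negative. -/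
theorem stmt_17 (L y0 y : ℝ) (hL : 1 < L)
    (h0 : Real.log (1 - 1 / L) < y0) (h0y : y0 < y) :
    (1 / (y - y0)) *
      (Real.log ((1 + L * (Real.exp y0 - 1)) / (1 + L * (Real.exp y - 1))) / (y - y0)
        + L * Real.exp y / (1 + L * (Real.exp y - 1))) < 0 := by
  have hy : 0 < y - y0 := by linarith
  have hL0 : 0 < L := by linarith
  have hfrac : (0:ℝ) < 1 - 1/L := by
    have h1 : 1/L < 1 := by rw [div_lt_one hL0]; linarith
    linarith
  have hpos : ∀ t, Real.log (1 - 1/L) < t → 0 < 1 + L * (Real.exp t - 1) := by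
    intro t ht
    have h1 : 1 - 1/L < Real.exp t := by
      calc 1 - 1/L = Real.exp (Real.log (1 - 1/L)) := (Real.exp_log hfrac).symm
        _ < Real.exp t := Real.exp_lt_exp.mpr ht
    have h2 : L * (1 - 1/L) < L * Real.exp t := by
      exact mul_lt_mul_of_pos_left h1 hL0
    have h3 : L * (1 - 1/L) = L - 1 := by field_simp
    nlinarith
  set f : ℝ → ℝ := fun t => Real.log (1 + L * (Real.exp t - 1)) with hf
  set g : ℝ → ℝ := fun t => L * Real.exp t / (1 + L * (Real.exp t - 1)) with hg
  have hderiv : ∀ t, Real.log (1 - 1/L) < t → HasDerivAt f (g t) t := by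
    intro t ht
    have h1 : HasDerivAt (fun s => 1 + L * (Real.exp s - 1)) (L * Real.exp t) t :=
      (((Real.hasDerivAt_exp t).sub_const 1).const_mul L).const_add 1
    exact h1.log (ne_of_gt (hpos t ht))
  -- mean value theorem
  obtain ⟨c, hc, hslope⟩ := exists_hasDerivAt_eq_slope f g h0y
    (fun t ht => by
      have ht' : Real.log (1 - 1/L) < t := lt_of_lt_of_le h0 ht.1
      exact (hderiv t ht').continuousAt.continuousWithinAt)
    (fun t ht => hderiv t (lt_trans h0 ht.1))
  -- g is strictly decreasing: g y < g c
  have hcD : Real.log (1 - 1/L) < c := lt_trans h0 hc.1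
  have hyD : Real.log (1 - 1/L) < y := lt_trans h0 h0y
  have hAc := hpos c hcD
  have hAy := hpos y hyD
  have hA0 := hpos y0 h0
  have hgy_lt : g y < g c := by
    rw [hg]
    simp only
    rw [div_lt_div_iff₀ hAy hAc]
    have hexp : Real.exp c < Real.exp y := Real.exp_lt_exp.mpr hc.2
    have hec : 0 < Real.exp c := Real.exp_pos c
    have hey : 0 < Real.exp y := Real.exp_pos y
    have key : L * (L - 1) * Real.exp c < L * (L - 1) * Real.exp y :=
      mul_lt_mul_of_pos_left hexp (mul_pos hL0 (by linarith))
    nlinarith [key]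
  -- rewrite the log of the quotient
  have hlog : Real.log ((1 + L * (Real.exp y0 - 1)) / (1 + L * (Real.exp y - 1)))
      = f y0 - f y := by
    rw [hf]
    simp only
    rw [Real.log_div (ne_of_gt hA0) (ne_of_gt hAy)]
  rw [hlog]
  have hslope' : (f y0 - f y) / (y - y0) = -g c := by
    rw [hslope]; field_simp; ring
  rw [hslope']
  have hinner : -g c + L * Real.exp y / (1 + L * (Real.exp y - 1)) < 0 := by
    have : L * Real.exp y / (1 + L * (Real.exp y - 1)) = g y := rfl
    rw [this]; linarith
  exact mul_neg_of_pos_of_neg (by positivity) hinner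
end
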